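/- arXiv:1906.02109 — 4 statements merged into one kernel-verified Lean document; each statement's English description precedes it below -/
import Mathlib

section
/- Let X be a germ at 0 ∈ ℂⁿ of holomorphic vector field, not identically zero, and let r ≥ 1. Suppose Y₁, …, Y_r are vector fields commuting with X that are generically linearly independent (in every neighborhood of 0 there is a point z where the vectors Y₁(z), …, Y_r(z) are linearly independent over ℂ). Suppose moreover that every vector field Z commuting with X satisfies: for all z near 0 the vectors Z(z), Y₁(z), …, Y_r(z) are ℂ-linearly dependent (so r(X) = r), and that there exists a vector field Y commuting with X which is not equal, as a germ, to any ℂ-linear combination of Y₁, …, Y_r (so d(X) > r). Then X admits a non-constant meromorphic first integral. -/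
open Filter Topology

noncomputable section

/-- Lie bracket of two (germs of) holomorphic vector fields:
`[X,Y](z) = DY(z)(X(z)) - DX(z)(Y(z))`. -/
def lieBr {E : Type*} [NormedAddCommGroup E] [NormedSpace ℂ E] (X Y : E → E) : E → E :=
  fun z => fderiv ℂ Y z (X z) - fderiv ℂ X z (Y z)

/-- `Y` commutes with `X` as germs at `0`: `[X,Y] = 0` near `0`. -/
def Commutes {E : Type*} [NormedAddCommGroup E] [NormedSpace ℂ E] (X Y : E → E) : Prop :=
  ∀ᶠ z in 𝓝 0, lieBr X Y z = 0

lemma aux_det_ne_zero_of_li {n r : ℕ} {v : Fin r → (Fin n → ℂ)}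
    (hv : LinearIndependent ℂ v) :
    ∃ ρ : Fin r → Fin n, (Matrix.of fun i j => v j (ρ i)).det ≠ 0 := by
  classical
  set c : Fin n → (Fin r → ℂ) := fun k j => v j k with hc
  have hspan : Submodule.span ℂ (Set.range c) = ⊤ := by
    by_contra hne
    obtain ⟨f, hf0, hfbot⟩ :=
      Submodule.exists_dual_map_eq_bot_of_lt_top (lt_top_iff_ne_top.2 hne) inferInstance
    have hfc : ∀ k, f (c k) = 0 := by
      intro k
      have hmem : f (c k) ∈ (Submodule.span ℂ (Set.range c)).map f :=
        Submodule.mem_map_of_mem (Submodule.subset_span ⟨k, rfl⟩)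
      rw [hfbot] at hmem
      simpa using hmem
    set a : Fin r → ℂ := fun j => f (fun j' => if j = j' then (1 : ℂ) else 0) with ha
    have hsum : ∑ j, a j • v j = 0 := by
      funext k
      have := LinearMap.pi_apply_eq_sum_univ f (c k)
      rw [hfc k] at this
      simpa [Finset.sum_apply, hc, smul_eq_mul, mul_comm] using this.symm
    have hz : ∀ j, a j = 0 := Fintype.linearIndependent_iff.1 hv _ hsum
    apply hf0
    refine LinearMap.ext fun x => ?_
    rw [LinearMap.pi_apply_eq_sum_univ f x]
    have hz' : ∀ i, f (fun j' => if i = j' then (1 : ℂ) else 0) = 0 := hz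
    simp [hz']
  obtain ⟨b, hbsub, hbspan, hbli⟩ := exists_linearIndependent ℂ (Set.range c)
  rw [hspan] at hbspan
  have hbfin : b.Finite := (Set.finite_range c).subset hbsub
  haveI : Fintype b := hbfin.fintype
  have hcard : Fintype.card b = r := by
    have h1 := finrank_span_set_eq_card hbli
    rw [hbspan] at h1
    rw [← Set.toFinset_card, ← h1, finrank_top, Module.finrank_fin_fun]
  obtain e := (Fintype.equivFinOfCardEq hcard).symm
  have hrange : ∀ i : Fin r, ∃ k, c k = (e i : Fin r → ℂ) := fun i => hbsub (e i).2
  choose ρ hρ using hrange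
  refine ⟨ρ, ?_⟩
  have hrows : LinearIndependent ℂ (fun i => (Matrix.of fun i j => v j (ρ i)) i) := by
    have : (fun i => (Matrix.of fun i j => v j (ρ i)) i) = fun i => (e i : Fin r → ℂ) := by
      funext i
      have := hρ i
      exact this
    rw [this]
    exact hbli.comp e e.injective
  have := Matrix.linearIndependent_rows_iff_isUnit.1 hrows
  exact ((Matrix.isUnit_iff_isUnit_det _).1 this).ne_zero

lemma aux_li_of_det_ne_zero {n r : ℕ} {v : Fin r → (Fin n → ℂ)} {ρ : Fin r → Fin n}
    (h : (Matrix.of fun i j => v j (ρ i)).det ≠ 0) : LinearIndependent ℂ v := by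
  have hA : LinearIndependent ℂ
      (fun j => (Matrix.of fun i j => v j (ρ i)).transpose j) :=
    Matrix.linearIndependent_cols_iff_isUnit.2 ((Matrix.isUnit_iff_isUnit_det _).2 h.isUnit)
  refine LinearIndependent.of_comp (LinearMap.funLeft ℂ ℂ ρ) ?_
  exact hA

lemma aux_analyticAt_det {r : ℕ} {E : Type*} [NormedAddCommGroup E] [NormedSpace ℂ E]
    {f : Fin r → Fin r → E → ℂ} {z : E}
    (hf : ∀ i j, AnalyticAt ℂ (f i j) z) :
    AnalyticAt ℂ (fun w => (Matrix.of fun i j => f i j w).det) z := by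
  simp only [Matrix.det_apply, Matrix.of_apply]
  apply Finset.analyticAt_fun_sum
  intro σ _
  have : AnalyticAt ℂ (fun w => ∏ i, f (σ i) i w) z :=
    Finset.analyticAt_fun_prod _ fun i _ => hf (σ i) i
  simpa [Units.smul_def, zsmul_eq_mul, Pi.mul_def] using (analyticAt_const (v := ((Equiv.Perm.sign σ : ℤ) : ℂ))).mul this

lemma aux_dense {E F : Type*} [NormedAddCommGroup E] [NormedSpace ℂ E]
    [NormedAddCommGroup F] [NormedSpace ℂ F]
    {B : Set E} (hB : IsOpen B) (hBc : IsPreconnected B) (h0 : (0 : E) ∈ B)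
    {h : E → ℂ} (hh : AnalyticOnNhd ℂ h B) (hne : ¬ h =ᶠ[𝓝 (0 : E)] fun _ => 0)
    {G : E → F} (hG : ContinuousOn G B) (hvan : ∀ z ∈ B, h z ≠ 0 → G z = 0) :
    ∀ z ∈ B, G z = 0 := by
  intro z hz
  set S : Set E := {w ∈ B | h w ≠ 0} with hS
  have hzc : z ∈ closure S := by
    rw [mem_closure_iff_nhds]
    intro V hV
    by_contra hemp
    rw [Set.not_nonempty_iff_eq_empty] at hemp
    have hz0 : h =ᶠ[𝓝 z] 0 := by
      have hVB : V ∩ B ∈ 𝓝 z := Filter.inter_mem hV (hB.mem_nhds hz)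
      filter_upwards [hVB] with w hw
      show h w = 0
      by_contra hw0
      have hmem : w ∈ V ∩ S := ⟨hw.1, hw.2, hw0⟩
      rw [hemp] at hmem
      exact hmem
    have heq := hh.eqOn_zero_of_preconnected_of_eventuallyEq_zero hBc hz hz0
    exact hne (Filter.eventuallyEq_of_mem (hB.mem_nhds h0) fun w hw => heq hw)
  haveI : (𝓝[S] z).NeBot := mem_closure_iff_nhdsWithin_neBot.1 hzc
  have h1 : Filter.Tendsto G (𝓝[S] z) (𝓝 (G z)) :=
    (hG.continuousAt (hB.mem_nhds hz)).tendsto.mono_left nhdsWithin_le_nhds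
  have h2 : Filter.Tendsto G (𝓝[S] z) (𝓝 0) := by
    apply Filter.Tendsto.congr' (f₁ := fun _ => (0 : F))
    · filter_upwards [self_mem_nhdsWithin] with w hw
      exact (hvan w hw.1 hw.2).symm
    · exact tendsto_const_nhds
  exact tendsto_nhds_unique h1 h2

/-- If `r(X) = r < d(X)` then `X` admits a non-constant meromorphic first integral. -/
theorem stmt1 (n r : ℕ) (hr : 1 ≤ r)
    (X : (Fin n → ℂ) → (Fin n → ℂ)) (hX : AnalyticAt ℂ X 0)
    (hX0 : ¬ (X =ᶠ[𝓝 0] fun _ => 0))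
    (Y : Fin r → ((Fin n → ℂ) → (Fin n → ℂ)))
    (hYa : ∀ i, AnalyticAt ℂ (Y i) 0)
    (hYc : ∀ i, Commutes X (Y i))
    -- `Y₁, …, Y_r` are generically linearly independent
    (hgli : ∀ U ∈ 𝓝 (0 : Fin n → ℂ), ∃ z ∈ U, LinearIndependent ℂ (fun i => Y i z))
    -- `r(X) = r`: any further commuting vector field is everywhere dependent with the `Yᵢ`
    (hmax : ∀ Z : (Fin n → ℂ) → (Fin n → ℂ), AnalyticAt ℂ Z 0 → Commutes X Z →
      ∀ᶠ z in 𝓝 (0 : Fin n → ℂ),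
        ¬ LinearIndependent ℂ (Fin.cons (Z z) (fun i => Y i z) : Fin (r + 1) → Fin n → ℂ))
    -- `d(X) > r`: some commuting vector field is not a `ℂ`-linear combination of the `Yᵢ`
    (hbig : ∃ Z : (Fin n → ℂ) → (Fin n → ℂ), AnalyticAt ℂ Z 0 ∧ Commutes X Z ∧
      ∀ c : Fin r → ℂ, ¬ (Z =ᶠ[𝓝 0] fun z => ∑ i, c i • Y i z)) :
    ∃ g h : (Fin n → ℂ) → ℂ, AnalyticAt ℂ g 0 ∧ AnalyticAt ℂ h 0 ∧
      ¬ (h =ᶠ[𝓝 0] fun _ => 0) ∧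
      (∀ᶠ z in 𝓝 0, h z * fderiv ℂ g z (X z) = g z * fderiv ℂ h z (X z)) ∧
      ∀ c : ℂ, ¬ (g =ᶠ[𝓝 0] fun z => c * h z) := by
  classical
  obtain ⟨Z, hZa, hZc, hZnc⟩ := hbig
  obtain ⟨ρ, hρne⟩ : ∃ ρ : Fin r → Fin n,
      ¬ ((fun z => (Matrix.of fun i j => Y j z (ρ i)).det) =ᶠ[𝓝 (0 : Fin n → ℂ)]
        fun _ => 0) := by
    by_contra hall
    push_neg at hall
    have hev : ∀ᶠ z in 𝓝 (0 : Fin n → ℂ),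
        ∀ ρ : Fin r → Fin n, (Matrix.of fun i j => Y j z (ρ i)).det = 0 :=
      Filter.eventually_all.2 fun ρ => hall ρ
    obtain ⟨z, hzU, hzli⟩ := hgli _ hev
    obtain ⟨ρ', hρ'⟩ := aux_det_ne_zero_of_li hzli
    exact hρ' (hzU ρ')
  set h : (Fin n → ℂ) → ℂ := fun z => (Matrix.of fun i j => Y j z (ρ i)).det with hh_def
  set g : Fin r → (Fin n → ℂ) → ℂ := fun j z =>
    (Matrix.of fun i j' => if j' = j then Z z (ρ i) else Y j' z (ρ i)).det with hg_def
  -- a good ball around 0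
  have hXev : ∀ᶠ w in 𝓝 (0 : Fin n → ℂ), AnalyticAt ℂ X w := hX.eventually_analyticAt
  have hYev : ∀ᶠ w in 𝓝 (0 : Fin n → ℂ), ∀ i, AnalyticAt ℂ (Y i) w :=
    Filter.eventually_all.2 fun i => (hYa i).eventually_analyticAt
  have hZev : ∀ᶠ w in 𝓝 (0 : Fin n → ℂ), AnalyticAt ℂ Z w := hZa.eventually_analyticAt
  have hYcev : ∀ᶠ w in 𝓝 (0 : Fin n → ℂ), ∀ i, lieBr X (Y i) w = 0 :=
    Filter.eventually_all.2 fun i => hYc i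
  have hZcev : ∀ᶠ w in 𝓝 (0 : Fin n → ℂ), lieBr X Z w = 0 := hZc
  have hmaxZ := hmax Z hZa hZc
  have hbigev := hXev.and (hYev.and (hZev.and (hYcev.and (hZcev.and hmaxZ))))
  obtain ⟨ε, hε, hball⟩ := Metric.mem_nhds_iff.1 hbigev
  set B := Metric.ball (0 : Fin n → ℂ) ε with hB_def
  have hBopen : IsOpen B := Metric.isOpen_ball
  have hBconn : IsPreconnected B := (convex_ball (0 : Fin n → ℂ) ε).isPreconnected
  have h0B : (0 : Fin n → ℂ) ∈ B := Metric.mem_ball_self hε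
  have hBmem : B ∈ 𝓝 (0 : Fin n → ℂ) := hBopen.mem_nhds h0B
  have hXB : ∀ z ∈ B, AnalyticAt ℂ X z := fun z hz => (hball hz).1
  have hYB : ∀ z ∈ B, ∀ i, AnalyticAt ℂ (Y i) z := fun z hz => (hball hz).2.1
  have hZB : ∀ z ∈ B, AnalyticAt ℂ Z z := fun z hz => (hball hz).2.2.1
  have hYcB : ∀ z ∈ B, ∀ i, lieBr X (Y i) z = 0 := fun z hz => (hball hz).2.2.2.1
  have hZcB : ∀ z ∈ B, lieBr X Z z = 0 := fun z hz => (hball hz).2.2.2.2.1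
  have hmaxB : ∀ z ∈ B, ¬ LinearIndependent ℂ
      (Fin.cons (Z z) (fun i => Y i z) : Fin (r + 1) → Fin n → ℂ) :=
    fun z hz => (hball hz).2.2.2.2.2
  -- analyticity of entries and determinants
  have hYent : ∀ z ∈ B, ∀ (j : Fin r) (k : Fin n), AnalyticAt ℂ (fun w => Y j w k) z := by
    intro z hz j k
    have := ((ContinuousLinearMap.proj (R := ℂ) (φ := fun _ : Fin n => ℂ) k).analyticAt
      (Y j z)).comp (hYB z hz j)
    exact this
  have hZent : ∀ z ∈ B, ∀ k : Fin n, AnalyticAt ℂ (fun w => Z w k) z := by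
    intro z hz k
    have := ((ContinuousLinearMap.proj (R := ℂ) (φ := fun _ : Fin n => ℂ) k).analyticAt
      (Z z)).comp (hZB z hz)
    exact this
  have hhB : AnalyticOnNhd ℂ h B := fun z hz =>
    aux_analyticAt_det (f := fun i j w => Y j w (ρ i)) (fun i j => hYent z hz j (ρ i))
  have hgB : ∀ j, AnalyticOnNhd ℂ (g j) B := by
    intro j z hz
    apply aux_analyticAt_det (f := fun i j' w => if j' = j then Z w (ρ i) else Y j' w (ρ i))
    intro i j'
    by_cases hjj : j' = j
    · simpa [hjj] using hZent z hz (ρ i)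
    · simpa [hjj] using hYent z hz j' (ρ i)
  -- pointwise independence
  have hliB : ∀ z, h z ≠ 0 → LinearIndependent ℂ (fun i => Y i z) := by
    intro z hzne
    exact aux_li_of_det_ne_zero (ρ := ρ) (v := fun i => Y i z) hzne
  -- Cramer identity on {h ≠ 0}
  have keyC : ∀ z ∈ B, h z ≠ 0 → h z • Z z = ∑ j, g j z • Y j z := by
    intro z hz hzne
    have hli := hliB z hzne
    have hdep := hmaxB z hz
    rw [linearIndependent_fin_cons] at hdep
    push_neg at hdep
    have hmem : Z z ∈ Submodule.span ℂ (Set.range fun i => Y i z) := hdep hli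
    obtain ⟨a, ha⟩ := (Submodule.mem_span_range_iff_exists_fun ℂ).1 hmem
    set M : Matrix (Fin r) (Fin r) ℂ := Matrix.of fun i j => Y j z (ρ i) with hM
    have hMa : M.mulVec a = fun i => Z z (ρ i) := by
      funext i
      have h1 := congrFun ha (ρ i)
      simp only [Finset.sum_apply, Pi.smul_apply, smul_eq_mul] at h1
      simp only [Matrix.mulVec, dotProduct, hM, Matrix.of_apply]
      rw [← h1]
      exact Finset.sum_congr rfl fun j _ => mul_comm _ _
    have hcram : ∀ j, g j z = h z * a j := by
      intro j
      have h1 : M.cramer (fun i => Z z (ρ i)) = M.det • a := by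
        rw [← hMa, Matrix.cramer_eq_adjugate_mulVec, Matrix.mulVec_mulVec, Matrix.adjugate_mul,
          Matrix.smul_mulVec, Matrix.one_mulVec]
      have h2 := congrFun h1 j
      rw [Matrix.cramer_apply] at h2
      have h3 : M.updateCol j (fun i => Z z (ρ i)) =
          Matrix.of fun i j' => if j' = j then Z z (ρ i) else Y j' z (ρ i) := by
        ext i j'
        by_cases hjj : j' = j <;> simp [Matrix.updateCol_apply, hjj, hM]
      rw [h3] at h2
      simpa [hg_def, hh_def, hM, smul_eq_mul] using h2
    calc h z • Z z = h z • ∑ j, a j • Y j z := by rw [ha]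
    _ = ∑ j, (h z * a j) • Y j z := by rw [Finset.smul_sum]; simp [smul_smul]
    _ = ∑ j, g j z • Y j z := Finset.sum_congr rfl fun j _ => by rw [hcram j]
  -- extend to all of B by density
  have keyC' : ∀ z ∈ B, h z • Z z = ∑ j, g j z • Y j z := by
    have hcont : ContinuousOn (fun z => h z • Z z - ∑ j, g j z • Y j z) B := by
      apply ContinuousOn.sub
      · exact (hhB.continuousOn).smul
          (fun z hz => ((hZB z hz).continuousAt).continuousWithinAt)
      · exact continuousOn_finset_sum _ fun j _ => ((hgB j).continuousOn).smul
          (fun z hz => ((hYB z hz j).continuousAt).continuousWithinAt)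
    have hvan : ∀ z ∈ B, h z ≠ 0 →
        (fun z => h z • Z z - ∑ j, g j z • Y j z) z = 0 := fun z hz hzne =>
      sub_eq_zero.2 (keyC z hz hzne)
    intro z hz
    exact sub_eq_zero.1 (aux_dense hBopen hBconn h0B hhB hρne hcont hvan z hz)
  -- differentiated identity
  have keyD : ∀ z ∈ B,
      (fderiv ℂ h z (X z)) • Z z = ∑ j, (fderiv ℂ (g j) z (X z)) • Y j z := by
    intro z hz
    have hfeq : (fun w => h w • Z w) =ᶠ[𝓝 z] (fun w => ∑ j, g j w • Y j w) :=
      Filter.eventuallyEq_of_mem (hBopen.mem_nhds hz) fun w hw => keyC' w hw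
    have hdh := (hhB z hz).differentiableAt
    have hdZ := (hZB z hz).differentiableAt
    have hdg : ∀ j, DifferentiableAt ℂ (g j) z := fun j => (hgB j z hz).differentiableAt
    have hdY : ∀ j, DifferentiableAt ℂ (Y j) z := fun j => (hYB z hz j).differentiableAt
    have hD : fderiv ℂ (fun w => h w • Z w) z
        = fderiv ℂ (fun w => ∑ j, g j w • Y j w) z := hfeq.fderiv_eq
    rw [fderiv_fun_smul hdh hdZ] at hD
    have hDr : fderiv ℂ (fun w => ∑ j, g j w • Y j w) z
        = ∑ j, (g j z • fderiv ℂ (Y j) z + (fderiv ℂ (g j) z).smulRight (Y j z)) := by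
      rw [fderiv_fun_sum (A := fun j w => g j w • Y j w) (fun j _ => ((hdg j).smul (hdY j)))]
      exact Finset.sum_congr rfl fun j _ => fderiv_fun_smul (hdg j) (hdY j)
    rw [hDr] at hD
    have hDX := DFunLike.congr_fun hD (X z)
    simp only [ContinuousLinearMap.add_apply, ContinuousLinearMap.coe_sum',
      Finset.sum_apply, ContinuousLinearMap.smul_apply,
      ContinuousLinearMap.smulRight_apply] at hDX
    have hcZ : fderiv ℂ Z z (X z) = fderiv ℂ X z (Z z) := by
      have := hZcB z hz
      simp only [lieBr] at this
      exact sub_eq_zero.1 this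
    have hcY : ∀ j, fderiv ℂ (Y j) z (X z) = fderiv ℂ X z (Y j z) := by
      intro j
      have := hYcB z hz j
      simp only [lieBr] at this
      exact sub_eq_zero.1 this
    rw [hcZ] at hDX
    simp only [hcY] at hDX
    have hlin : h z • fderiv ℂ X z (Z z) = ∑ j, g j z • fderiv ℂ X z (Y j z) := by
      have := congrArg (fderiv ℂ X z) (keyC' z hz)
      simpa [map_smul, map_sum] using this
    rw [Finset.sum_add_distrib] at hDX
    rw [hlin] at hDX
    exact add_left_cancel hDX
  -- first integral equations
  have keyE : ∀ j, ∀ z ∈ B,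
      h z * fderiv ℂ (g j) z (X z) = g j z * fderiv ℂ h z (X z) := by
    intro j
    have hvan : ∀ z ∈ B, h z ≠ 0 →
        (fun z => h z * fderiv ℂ (g j) z (X z) - g j z * fderiv ℂ h z (X z)) z = 0 := by
      intro z hz hzne
      have hli := hliB z hzne
      have e1 : ∑ j', (fderiv ℂ h z (X z) * g j' z) • Y j' z
          = ∑ j', (h z * fderiv ℂ (g j') z (X z)) • Y j' z := by
        calc ∑ j', (fderiv ℂ h z (X z) * g j' z) • Y j' z
            = fderiv ℂ h z (X z) • ∑ j', g j' z • Y j' z := by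
              rw [Finset.smul_sum]; simp [smul_smul]
          _ = fderiv ℂ h z (X z) • (h z • Z z) := by rw [keyC' z hz]
          _ = h z • (fderiv ℂ h z (X z) • Z z) := smul_comm _ _ _
          _ = h z • ∑ j', (fderiv ℂ (g j') z (X z)) • Y j' z := by rw [keyD z hz]
          _ = ∑ j', (h z * fderiv ℂ (g j') z (X z)) • Y j' z := by
              rw [Finset.smul_sum]; simp [smul_smul]
      have e3 : ∑ j', ((fderiv ℂ h z (X z) * g j' z) - (h z * fderiv ℂ (g j') z (X z)))
          • Y j' z = 0 := by
        simp only [sub_smul, Finset.sum_sub_distrib]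
        rw [e1, sub_self]
      have h4 := Fintype.linearIndependent_iff.1 hli _ e3 j
      show h z * fderiv ℂ (g j) z (X z) - g j z * fderiv ℂ h z (X z) = 0
      linear_combination -h4
    have hcont : ContinuousOn
        (fun z => h z * fderiv ℂ (g j) z (X z) - g j z * fderiv ℂ h z (X z)) B := by
      have hXC : ContinuousOn X B := fun z hz => ((hXB z hz).continuousAt).continuousWithinAt
      have hdg : ContinuousOn (fun z => fderiv ℂ (g j) z (X z)) B :=
        ((hgB j).fderiv.continuousOn).clm_apply hXC
      have hdh : ContinuousOn (fun z => fderiv ℂ h z (X z)) B :=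
        (hhB.fderiv.continuousOn).clm_apply hXC
      exact (hhB.continuousOn.mul hdg).sub ((hgB j).continuousOn.mul hdh)
    intro z hz
    exact sub_eq_zero.1 (aux_dense hBopen hBconn h0B hhB hρne hcont hvan z hz)
  -- non-constancy of some g j
  have hexj : ∃ j : Fin r, ∀ c : ℂ, ¬ (g j =ᶠ[𝓝 (0 : Fin n → ℂ)] fun z => c * h z) := by
    by_contra hcon
    push_neg at hcon
    choose c hc using hcon
    have hev2 : ∀ᶠ z in 𝓝 (0 : Fin n → ℂ), ∀ j, g j z = c j * h z :=
      Filter.eventually_all.2 hc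
    have hBev : ∀ᶠ z in 𝓝 (0 : Fin n → ℂ), z ∈ B := hBmem
    obtain ⟨ε', hε', hball'⟩ := Metric.mem_nhds_iff.1 (hBev.and hev2)
    set B' := Metric.ball (0 : Fin n → ℂ) ε' with hB'_def
    apply hZnc c
    have hvan : ∀ z ∈ B', h z ≠ 0 → (fun z => Z z - ∑ i, c i • Y i z) z = 0 := by
      intro z hz hzne
      have hzB : z ∈ B := (hball' hz).1
      have hgc := (hball' hz).2
      have e2 : ∑ j', g j' z • Y j' z = h z • ∑ i, c i • Y i z := by
        rw [Finset.smul_sum]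
        exact Finset.sum_congr rfl fun i _ => by rw [hgc i, smul_smul, mul_comm]
      have h5 : h z • (Z z - ∑ i, c i • Y i z) = 0 := by
        rw [smul_sub, keyC' z hzB, e2, sub_self]
      rcases smul_eq_zero.1 h5 with h6 | h6
      · exact absurd h6 hzne
      · exact h6
    have hcontZ : ContinuousOn (fun z => Z z - ∑ i, c i • Y i z) B' := by
      apply ContinuousOn.sub
      · exact fun z hz => ((hZB z (hball' hz).1).continuousAt).continuousWithinAt
      · exact continuousOn_finset_sum _ fun i _ => ContinuousOn.const_smul
          (fun z hz => ((hYB z (hball' hz).1 i).continuousAt).continuousWithinAt) (c i)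
    have hzero := aux_dense (B := B') Metric.isOpen_ball
      (convex_ball (0 : Fin n → ℂ) ε').isPreconnected (Metric.mem_ball_self hε')
      (fun z hz => hhB z (hball' hz).1) hρne hcontZ hvan
    exact Filter.eventuallyEq_of_mem
      (Metric.isOpen_ball.mem_nhds (Metric.mem_ball_self hε'))
      fun z hz => sub_eq_zero.1 (hzero z hz)
  obtain ⟨j0, hj0⟩ := hexj
  refine ⟨g j0, h, hgB j0 0 h0B, hhB 0 h0B, hρne, ?_, hj0⟩
  filter_upwards [hBmem] with z hz
  exact keyE j0 z hz
end
end

section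
/- Let X be a germ at 0 ∈ ℂⁿ of holomorphic vector field with no non-constant meromorphic first integral: whenever g, h are holomorphic near 0 with h not identically zero and h·X(g) = g·X(h) near 0, there exists c ∈ ℂ with g = c·h near 0. Suppose Y₁, …, Y_r commute with X, are generically linearly independent (in every neighborhood of 0 there is a point z where Y₁(z), …, Y_r(z) are linearly independent over ℂ), and every vector field Y commuting with X satisfies: for all z near 0 the vectors Y(z), Y₁(z), …, Y_r(z) are ℂ-linearly dependent. Then every vector field Y commuting with X is, as a germ, a ℂ-linear combination of Y₁, …, Y_r; in particular d(X) = r(X) = r. -/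
open Filter Topology

noncomputable section

-- helper lemmas
open Matrix
lemma det_analyticOnNhd {E : Type*} [NormedAddCommGroup E] [NormedSpace ℂ E]
    {m : Type*} [Fintype m] [DecidableEq m] {A : E → Matrix m m ℂ} {U : Set E}
    (h : ∀ i j, AnalyticOnNhd ℂ (fun z => A z i j) U) :
    AnalyticOnNhd ℂ (fun z => (A z).det) U := by
  have : (fun z => (A z).det)
      = fun z => ∑ σ : Equiv.Perm m, (Equiv.Perm.sign σ : ℂ) * ∏ i, A z (σ i) i := by
    funext z
    rw [Matrix.det_apply]
    simp [Units.smul_def, zsmul_eq_mul]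
  rw [this]
  apply Finset.analyticOnNhd_fun_sum
  intro σ _
  exact (analyticOnNhd_const).mul (Finset.analyticOnNhd_fun_prod _ fun i _ => h (σ i) i)

lemma exists_rows_det_ne_zero {n r : ℕ} {v : Fin r → (Fin n → ℂ)}
    (hv : LinearIndependent ℂ v) :
    ∃ ρ : Fin r → Fin n, Function.Injective ρ ∧
      (Matrix.of fun k i => v i (ρ k) : Matrix (Fin r) (Fin r) ℂ).det ≠ 0 := by
  classical
  set A : Matrix (Fin r) (Fin n) ℂ := Matrix.of fun i j => v i j with hA
  have hrank : A.rank = r := by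
    have : LinearIndependent ℂ (fun i => A i) := hv
    simpa using this.rank_matrix
  have hspan : Submodule.span ℂ (Set.range Aᵀ) = ⊤ := by
    apply Submodule.eq_top_of_finrank_eq
    rw [show Module.finrank ℂ (Submodule.span ℂ (Set.range Aᵀ)) = A.rank from
      (Matrix.rank_eq_finrank_span_cols A).symm, hrank]
    simp [Module.finrank_pi]
  obtain ⟨b, hbsub, hbspan, hbli⟩ := exists_linearIndependent ℂ (Set.range Aᵀ)
  rw [hspan] at hbspan
  have hbfin : b.Finite := (Set.finite_range Aᵀ).subset hbsub
  haveI := hbfin.fintype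
  have hbasis : Module.Basis b ℂ (Fin r → ℂ) := Module.Basis.mk hbli (by
    rw [Subtype.range_coe_subtype, Set.setOf_mem_eq, hbspan])
  have hcard : Fintype.card b = r := by
    have := Module.finrank_eq_card_basis hbasis
    simpa [Module.finrank_pi] using this.symm
  have pick : ∀ x : b, ∃ j : Fin n, Aᵀ j = (x : Fin r → ℂ) := fun x => hbsub x.2
  choose p hp using pick
  let e : b ≃ Fin r := Fintype.equivFinOfCardEq hcard
  refine ⟨fun k => p (e.symm k), ?_, ?_⟩
  · intro k k' hkk'
    simp only at hkk'
    have : (e.symm k : Fin r → ℂ) = (e.symm k' : Fin r → ℂ) := by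
      rw [← hp (e.symm k), ← hp (e.symm k'), hkk']
    exact e.symm.injective (Subtype.ext this)
  · have hli : LinearIndependent ℂ (fun k : Fin r => (e.symm k : Fin r → ℂ)) :=
      hbli.comp e.symm e.symm.injective
    have heq : (fun k : Fin r => (Matrix.of fun k i => v i (p (e.symm k)) :
        Matrix (Fin r) (Fin r) ℂ) k) = fun k => (e.symm k : Fin r → ℂ) := by
      funext k
      have := hp (e.symm k)
      funext i
      have : Aᵀ (p (e.symm k)) i = (e.symm k : Fin r → ℂ) i := by rw [hp (e.symm k)]
      simpa [Matrix.transpose_apply, hA] using this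
    have : IsUnit (Matrix.of fun k i => v i (p (e.symm k)) : Matrix (Fin r) (Fin r) ℂ) := by
      rw [← Matrix.linearIndependent_rows_iff_isUnit]
      rw [← heq] at hli; exact hli
    intro h0
    rw [Matrix.isUnit_iff_isUnit_det, isUnit_iff_ne_zero] at this
    exact this h0

lemma mulVec_eq_zero_of_det {r : ℕ} {M : Matrix (Fin r) (Fin r) ℂ} (h : M.det ≠ 0)
    {c : Fin r → ℂ} (hc : M *ᵥ c = 0) : c = 0 := by
  have : IsUnit M := by rw [Matrix.isUnit_iff_isUnit_det, isUnit_iff_ne_zero]; exact h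
  have hinj := Matrix.mulVec_injective_iff_isUnit.2 this
  have : M *ᵥ c = M *ᵥ 0 := by rw [hc, Matrix.mulVec_zero]
  exact hinj this

lemma vanish_of_vanish_on_ne {E G : Type*} [NormedAddCommGroup E] [NormedSpace ℂ E]
    [NormedAddCommGroup G] [NormedSpace ℂ G]
    {F : E → G} {D : E → ℂ} {ε : ℝ} (hε : 0 < ε)
    (hD : AnalyticOnNhd ℂ D (Metric.ball (0 : E) ε))
    (hD0 : ¬ D =ᶠ[𝓝 (0 : E)] (fun _ => 0))
    (hF : ContinuousOn F (Metric.ball (0 : E) ε))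
    (h : ∀ z ∈ Metric.ball (0 : E) ε, D z ≠ 0 → F z = 0) :
    ∀ z ∈ Metric.ball (0 : E) ε, F z = 0 := by
  intro w hw
  by_contra hFw
  have hco : ContinuousAt F w := hF.continuousAt (Metric.isOpen_ball.mem_nhds hw)
  have h1 : ∀ᶠ z in 𝓝 w, F z ≠ 0 := hco.eventually_ne hFw
  have h2 : ∀ᶠ z in 𝓝 w, z ∈ Metric.ball (0 : E) ε :=
    Metric.isOpen_ball.mem_nhds hw
  have hDw : D =ᶠ[𝓝 w] 0 := by
    filter_upwards [h1, h2] with z hz1 hz2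
    by_contra hDz
    exact hz1 (h z hz2 hDz)
  have := hD.eqOn_zero_of_preconnected_of_eventuallyEq_zero
    ((convex_ball (0 : E) ε).isPreconnected) hw hDw
  apply hD0
  filter_upwards [Metric.ball_mem_nhds (0 : E) hε] with z hz
  exact this hz

lemma fderiv_apply_analyticOnNhd {E F' : Type*} [NormedAddCommGroup E] [NormedSpace ℂ E]
    [NormedAddCommGroup F'] [NormedSpace ℂ F'] [CompleteSpace F']
    {g : E → F'} {X : E → E} {U : Set E}
    (hg : AnalyticOnNhd ℂ g U) (hX : AnalyticOnNhd ℂ X U) :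
    AnalyticOnNhd ℂ (fun z => fderiv ℂ g z (X z)) U := by
  intro z hz
  exact ((ContinuousLinearMap.apply ℂ F').analyticAt_bilinear
    (X z, fderiv ℂ g z)).comp₂ (hX z hz) (hg.fderiv z hz)

lemma deriv_of_smul_comb_eq {E : Type*} [NormedAddCommGroup E] [NormedSpace ℂ E]
    {r : ℕ} {d : E → ℂ} {gs : Fin r → E → ℂ} {Y : E → E} {Ys : Fin r → E → E} {z : E}
    (hd : DifferentiableAt ℂ d z) (hgs : ∀ i, DifferentiableAt ℂ (gs i) z)
    (hY : DifferentiableAt ℂ Y z) (hYs : ∀ i, DifferentiableAt ℂ (Ys i) z)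
    (heq : (fun w => d w • Y w) =ᶠ[𝓝 z] (fun w => ∑ i, gs i w • Ys i w)) (v : E) :
    fderiv ℂ d z v • Y z + d z • fderiv ℂ Y z v
      = ∑ i, (fderiv ℂ (gs i) z v • Ys i z + gs i z • fderiv ℂ (Ys i) z v) := by
  have h1 : HasFDerivAt (fun w => d w • Y w)
      (d z • fderiv ℂ Y z + (fderiv ℂ d z).smulRight (Y z)) z :=
    (hd.hasFDerivAt).smul (hY.hasFDerivAt)
  have h2 : HasFDerivAt (fun w => ∑ i, gs i w • Ys i w)
      (∑ i, (gs i z • fderiv ℂ (Ys i) z + (fderiv ℂ (gs i) z).smulRight (Ys i z))) z :=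
    HasFDerivAt.fun_sum fun i _ => ((hgs i).hasFDerivAt).smul ((hYs i).hasFDerivAt)
  have h2' : HasFDerivAt (fun w => d w • Y w)
      (∑ i, (gs i z • fderiv ℂ (Ys i) z + (fderiv ℂ (gs i) z).smulRight (Ys i z))) z :=
    h2.congr_of_eventuallyEq heq
  have := h1.unique h2'
  have happ := congrArg (fun L => L v) this
  simp only [ContinuousLinearMap.add_apply, ContinuousLinearMap.smul_apply,
    ContinuousLinearMap.smulRight_apply, ContinuousLinearMap.sum_apply] at happ
  rw [add_comm ((fderiv ℂ d z) v • Y z), happ]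
  exact Finset.sum_congr rfl fun i _ => add_comm _ _

/-- If `X` has no non-constant meromorphic first integral and `r(X) = r`, realized by
`Y₁, …, Y_r`, then every commuting vector field is a `ℂ`-linear combination of the `Yᵢ`
(in particular `d(X) = r(X) = r`). -/
theorem stmt4 (n r : ℕ) (X : (Fin n → ℂ) → (Fin n → ℂ)) (hX : AnalyticAt ℂ X 0)
    -- `X` has no non-constant meromorphic first integral
    (hmero : ∀ g h : (Fin n → ℂ) → ℂ, AnalyticAt ℂ g 0 → AnalyticAt ℂ h 0 →
      ¬ (h =ᶠ[𝓝 0] fun _ => 0) →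
      (∀ᶠ z in 𝓝 0, h z * fderiv ℂ g z (X z) = g z * fderiv ℂ h z (X z)) →
      ∃ c : ℂ, g =ᶠ[𝓝 0] fun z => c * h z)
    (Ys : Fin r → ((Fin n → ℂ) → (Fin n → ℂ)))
    (hYa : ∀ i, AnalyticAt ℂ (Ys i) 0)
    (hYc : ∀ i, Commutes X (Ys i))
    -- the `Yᵢ` are generically linearly independent
    (hgli : ∀ U ∈ 𝓝 (0 : Fin n → ℂ), ∃ z ∈ U, LinearIndependent ℂ (fun i => Ys i z))
    -- every commuting vector field is everywhere dependent with the `Yᵢ` near `0`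
    (hmax : ∀ Z : (Fin n → ℂ) → (Fin n → ℂ), AnalyticAt ℂ Z 0 → Commutes X Z →
      ∀ᶠ z in 𝓝 (0 : Fin n → ℂ),
        ¬ LinearIndependent ℂ (Fin.cons (Z z) (fun i => Ys i z) : Fin (r + 1) → Fin n → ℂ)) :
    ∀ Y : (Fin n → ℂ) → (Fin n → ℂ), AnalyticAt ℂ Y 0 → Commutes X Y →
      ∃ c : Fin r → ℂ, Y =ᶠ[𝓝 0] fun z => ∑ i, c i • Ys i z := by
  classical
  intro Y hYan hYcom
  -- Step A : choose rows
  have hrho : ∃ ρ : Fin r → Fin n, Function.Injective ρ ∧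
      ¬ ((fun z => (Matrix.of fun k i => Ys i z (ρ k) : Matrix (Fin r) (Fin r) ℂ).det)
        =ᶠ[𝓝 (0 : Fin n → ℂ)] fun _ => 0) := by
    by_contra hcon
    push_neg at hcon
    have hall : ∀ᶠ z in 𝓝 (0 : Fin n → ℂ), ∀ ρ : {ρ : Fin r → Fin n // Function.Injective ρ},
        (Matrix.of fun k i => Ys i z (ρ.1 k) : Matrix (Fin r) (Fin r) ℂ).det = 0 := by
      rw [eventually_all]
      intro ρ
      exact hcon ρ.1 ρ.2
    obtain ⟨z, hz, hli⟩ := hgli _ hall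
    obtain ⟨ρ, hρinj, hρdet⟩ := exists_rows_det_ne_zero hli
    exact hρdet (hz ⟨ρ, hρinj⟩)
  obtain ⟨ρ, hρinj, hd0⟩ := hrho
  set M : (Fin n → ℂ) → Matrix (Fin r) (Fin r) ℂ :=
    fun z => Matrix.of fun k i => Ys i z (ρ k) with hMdef
  set d : (Fin n → ℂ) → ℂ := fun z => (M z).det with hddef
  set bv : (Fin n → ℂ) → (Fin r → ℂ) := fun z k => Y z (ρ k) with hbvdef
  set g : Fin r → (Fin n → ℂ) → ℂ := fun i z => Matrix.cramer (M z) (bv z) i with hgdef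
  have hd0' : ¬ (d =ᶠ[𝓝 (0 : Fin n → ℂ)] fun _ => 0) := hd0
  -- Step B : a ball where everything holds
  obtain ⟨sX, hsX, haX⟩ := hX.exists_mem_nhds_analyticOnNhd
  obtain ⟨sY, hsY, haY⟩ := hYan.exists_mem_nhds_analyticOnNhd
  choose sYs hsYs haYs using fun i => (hYa i).exists_mem_nhds_analyticOnNhd
  have hmaxY := hmax Y hYan hYcom
  have hbig : (sX ∩ sY ∩ (⋂ i, sYs i)) ∩
      (({z | lieBr X Y z = 0} ∩ (⋂ i, {z | lieBr X (Ys i) z = 0})) ∩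
        {z | ¬ LinearIndependent ℂ
          (Fin.cons (Y z) (fun i => Ys i z) : Fin (r + 1) → Fin n → ℂ)}) ∈
        𝓝 (0 : Fin n → ℂ) := by
    refine Filter.inter_mem (Filter.inter_mem (Filter.inter_mem hsX hsY) ?_)
      (Filter.inter_mem (Filter.inter_mem hYcom ?_) hmaxY)
    · exact (Filter.iInter_mem).2 hsYs
    · exact (Filter.iInter_mem).2 fun i => hYc i
  obtain ⟨ε, hεpos, hball⟩ := Metric.mem_nhds_iff.1 hbig
  set B := Metric.ball (0 : Fin n → ℂ) ε with hBdef
  have hBX : AnalyticOnNhd ℂ X B := haX.mono fun z hz => (hball hz).1.1.1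
  have hBY : AnalyticOnNhd ℂ Y B := haY.mono fun z hz => (hball hz).1.1.2
  have hBYs : ∀ i, AnalyticOnNhd ℂ (Ys i) B := fun i =>
    (haYs i).mono fun z hz => Set.mem_iInter.1 (hball hz).1.2 i
  have hcomY : ∀ z ∈ B, fderiv ℂ Y z (X z) = fderiv ℂ X z (Y z) := by
    intro z hz
    have h0 := (hball hz).2.1.1
    simp only [Set.mem_setOf_eq, lieBr] at h0
    exact sub_eq_zero.1 h0
  have hcomYs : ∀ i, ∀ z ∈ B, fderiv ℂ (Ys i) z (X z) = fderiv ℂ X z (Ys i z) := by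
    intro i z hz
    have h0 := Set.mem_iInter.1 (hball hz).2.1.2 i
    simp only [Set.mem_setOf_eq, lieBr] at h0
    exact sub_eq_zero.1 h0
  have hdep : ∀ z ∈ B, ¬ LinearIndependent ℂ
      (Fin.cons (Y z) (fun i => Ys i z) : Fin (r + 1) → Fin n → ℂ) :=
    fun z hz => (hball hz).2.2
  -- analyticity of the pieces
  have hcomp : ∀ i k, AnalyticOnNhd ℂ (fun z => Ys i z (ρ k)) B := by
    intro i k z hz
    exact ((ContinuousLinearMap.proj (R := ℂ) (φ := fun _ : Fin n => ℂ) (ρ k)).analyticAt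
      (Ys i z)).comp (hBYs i z hz)
  have hcompY : ∀ k, AnalyticOnNhd ℂ (fun z => Y z (ρ k)) B := by
    intro k z hz
    exact ((ContinuousLinearMap.proj (R := ℂ) (φ := fun _ : Fin n => ℂ) (ρ k)).analyticAt
      (Y z)).comp (hBY z hz)
  have hMd : AnalyticOnNhd ℂ d B := det_analyticOnNhd fun k i => hcomp i k
  have hgA : ∀ i, AnalyticOnNhd ℂ (g i) B := by
    intro i
    have hgi : g i = fun z => ((M z).updateCol i (bv z)).det := by
      funext z
      exact Matrix.cramer_apply (M z) (bv z) i
    rw [hgi]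
    apply det_analyticOnNhd
    intro k j
    by_cases hji : j = i
    · subst hji
      have : (fun z => (M z).updateCol j (bv z) k j) = fun z => bv z k := by
        funext z; simp [Matrix.updateCol_apply]
      rw [this]
      exact hcompY k
    · have : (fun z => (M z).updateCol i (bv z) k j) = fun z => M z k j := by
        funext z; simp [Matrix.updateCol_apply, hji]
      rw [this]
      exact hcomp j k
  have hXd : AnalyticOnNhd ℂ (fun z => fderiv ℂ d z (X z)) B :=
    fderiv_apply_analyticOnNhd hMd hBX
  have hXg : ∀ i, AnalyticOnNhd ℂ (fun z => fderiv ℂ (g i) z (X z)) B := fun i =>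
    fderiv_apply_analyticOnNhd (hgA i) hBX
  -- extraction of coefficients at points where d ≠ 0
  have hext : ∀ z, d z ≠ 0 → ∀ c : Fin r → ℂ, ∑ i, c i • Ys i z = 0 → c = 0 := by
    intro z hz c hc
    apply mulVec_eq_zero_of_det hz (c := c)
    funext k
    have h1 := congrFun hc (ρ k)
    simp only [Finset.sum_apply, Pi.smul_apply, smul_eq_mul, Pi.zero_apply] at h1
    simp only [Matrix.mulVec, dotProduct, Matrix.of_apply, Pi.zero_apply, hMdef]
    rw [← h1]
    exact Finset.sum_congr rfl fun i _ => mul_comm _ _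
  have hLI : ∀ z, d z ≠ 0 → LinearIndependent ℂ (fun i => Ys i z) := by
    intro z hz
    rw [Fintype.linearIndependent_iff]
    intro c hc i
    exact congrFun (hext z hz c hc) i
  -- Step 1 : d • Y = ∑ gᵢ • Yᵢ on {d ≠ 0}
  have hstar0 : ∀ z ∈ B, d z ≠ 0 → d z • Y z = ∑ i, g i z • Ys i z := by
    intro z hzB hz
    have hmem : Y z ∈ Submodule.span ℂ (Set.range fun i => Ys i z) := by
      by_contra hmem
      exact hdep z hzB (linearIndependent_fin_cons.2 ⟨hLI z hz, hmem⟩)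
    obtain ⟨a, ha⟩ := (Submodule.mem_span_range_iff_exists_fun ℂ).1 hmem
    have hMa : M z *ᵥ a = bv z := by
      funext k
      have h1 := congrFun ha (ρ k)
      simp only [Finset.sum_apply, Pi.smul_apply, smul_eq_mul] at h1
      simp only [Matrix.mulVec, dotProduct, Matrix.of_apply, hMdef, hbvdef]
      rw [← h1]
      exact Finset.sum_congr rfl fun i _ => mul_comm _ _
    have hcr : ∀ i, g i z = d z * a i := by
      have h2 : M z *ᵥ (Matrix.cramer (M z) (bv z)) = M z *ᵥ (d z • a) := by
        rw [Matrix.mulVec_cramer, Matrix.mulVec_smul, hMa]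
      have h3 : Matrix.cramer (M z) (bv z) - d z • a = 0 :=
        mulVec_eq_zero_of_det hz (by rw [Matrix.mulVec_sub, h2, sub_self])
      intro i
      have h4 := congrFun h3 i
      simp only [Pi.sub_apply, Pi.smul_apply, smul_eq_mul, Pi.zero_apply, sub_eq_zero] at h4
      exact h4
    calc d z • Y z = d z • ∑ i, a i • Ys i z := by rw [ha]
      _ = ∑ i, (d z * a i) • Ys i z := by
          rw [Finset.smul_sum]
          exact Finset.sum_congr rfl fun i _ => smul_smul _ _ _
      _ = ∑ i, g i z • Ys i z := Finset.sum_congr rfl fun i _ => by rw [(hcr i).symm]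
  -- Step 1' : the identity extends to B
  have hFa : AnalyticOnNhd ℂ (fun z => d z • Y z - ∑ i, g i z • Ys i z) B :=
    (hMd.smul hBY).sub (Finset.analyticOnNhd_fun_sum _ fun i _ => (hgA i).smul (hBYs i))
  have hstar : ∀ z ∈ B, d z • Y z = ∑ i, g i z • Ys i z := by
    intro z hz
    have := vanish_of_vanish_on_ne hεpos hMd hd0' hFa.continuousOn
      (fun w hw hdw => sub_eq_zero.2 (hstar0 w hw hdw)) z hz
    exact sub_eq_zero.1 this
  -- Step 2 : X(d) • Y = ∑ X(gᵢ) • Yᵢ on B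
  have hstep2 : ∀ z ∈ B, fderiv ℂ d z (X z) • Y z
      = ∑ i, fderiv ℂ (g i) z (X z) • Ys i z := by
    intro z hz
    have hev : (fun w => d w • Y w) =ᶠ[𝓝 z] (fun w => ∑ i, g i w • Ys i w) := by
      filter_upwards [Metric.isOpen_ball.mem_nhds hz] with w hw
      exact hstar w hw
    have hE1 := deriv_of_smul_comb_eq (hMd z hz).differentiableAt
      (fun i => ((hgA i) z hz).differentiableAt) (hBY z hz).differentiableAt
      (fun i => (hBYs i z hz).differentiableAt) hev (X z)
    have hsm : d z • fderiv ℂ Y z (X z) = ∑ i, g i z • fderiv ℂ (Ys i) z (X z) := by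
      rw [hcomY z hz, ← (fderiv ℂ X z).map_smul, hstar z hz, map_sum]
      exact Finset.sum_congr rfl fun i _ => by
        rw [(fderiv ℂ X z).map_smul, ← hcomYs i z hz]
    rw [Finset.sum_add_distrib, ← hsm] at hE1
    exact add_right_cancel hE1
  -- Step 3 : the meromorphic first-integral relation
  have hH0 : ∀ i, ∀ z ∈ B, d z * fderiv ℂ (g i) z (X z)
      = g i z * fderiv ℂ d z (X z) := by
    have hkey : ∀ z ∈ B, d z ≠ 0 → ∀ i,
        d z * fderiv ℂ (g i) z (X z) - g i z * fderiv ℂ d z (X z) = 0 := by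
      intro z hz hdz
      have e1 : ∑ i, (d z * fderiv ℂ (g i) z (X z)) • Ys i z
          = d z • (fderiv ℂ d z (X z) • Y z) := by
        rw [hstep2 z hz, Finset.smul_sum]
        exact Finset.sum_congr rfl fun i _ => (smul_smul _ _ _).symm
      have e2 : ∑ i, (g i z * fderiv ℂ d z (X z)) • Ys i z
          = fderiv ℂ d z (X z) • (d z • Y z) := by
        rw [hstar z hz, Finset.smul_sum]
        exact Finset.sum_congr rfl fun i _ => by
          rw [smul_smul, mul_comm]
      have hsum : ∑ i, (d z * fderiv ℂ (g i) z (X z)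
          - g i z * fderiv ℂ d z (X z)) • Ys i z = 0 := by
        have : ∀ i, (d z * fderiv ℂ (g i) z (X z) - g i z * fderiv ℂ d z (X z)) • Ys i z
            = (d z * fderiv ℂ (g i) z (X z)) • Ys i z
              - (g i z * fderiv ℂ d z (X z)) • Ys i z :=
          fun i => sub_smul _ _ _
        rw [Finset.sum_congr rfl fun i _ => this i, Finset.sum_sub_distrib, e1, e2,
          smul_smul, smul_smul, mul_comm, sub_self]
      intro i
      exact congrFun (hext z hdz _ hsum) i
    intro i z hz
    have := vanish_of_vanish_on_ne (G := ℂ)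
      (F := fun z => d z * fderiv ℂ (g i) z (X z) - g i z * fderiv ℂ d z (X z))
      hεpos hMd hd0'
      (((hMd.mul (hXg i)).sub ((hgA i).mul hXd)).continuousOn)
      (fun w hw hdw => hkey w hw hdw i) z hz
    exact sub_eq_zero.1 this
  -- Step 4 : apply the no-first-integral hypothesis
  have hmer : ∀ i, ∃ cc : ℂ, g i =ᶠ[𝓝 (0 : Fin n → ℂ)] fun z => cc * d z := by
    intro i
    apply hmero (g i) d ((hgA i) 0 (Metric.mem_ball_self hεpos))
      (hMd 0 (Metric.mem_ball_self hεpos)) hd0'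
    filter_upwards [Metric.ball_mem_nhds _ hεpos] with z hz
    exact hH0 i z hz
  choose c hc using hmer
  refine ⟨c, ?_⟩
  -- Step 5 : conclude
  have hcall : ∀ᶠ z in 𝓝 (0 : Fin n → ℂ), ∀ i, g i z = c i * d z := by
    rw [eventually_all]
    exact hc
  obtain ⟨ε₂, hε₂pos, hball₂⟩ := Metric.mem_nhds_iff.1
    (Filter.inter_mem hcall (Metric.ball_mem_nhds (0 : Fin n → ℂ) hεpos))
  have hB2 : Metric.ball (0 : Fin n → ℂ) ε₂ ⊆ B := fun z hz => (hball₂ hz).2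
  have hfin : ∀ z ∈ Metric.ball (0 : Fin n → ℂ) ε₂, Y z - ∑ i, c i • Ys i z = 0 := by
    apply vanish_of_vanish_on_ne hε₂pos (hMd.mono hB2) hd0'
      (((hBY.mono hB2).sub (Finset.analyticOnNhd_fun_sum _ fun i _ =>
        analyticOnNhd_const.smul ((hBYs i).mono hB2))).continuousOn)
    intro z hz hdz
    have h1 := hstar z (hB2 hz)
    have h2 : ∀ i, g i z = c i * d z := (hball₂ hz).1
    have h3 : d z • Y z = d z • ∑ i, c i • Ys i z := by
      rw [h1, Finset.smul_sum]
      exact Finset.sum_congr rfl fun i _ => by rw [h2 i, mul_comm, mul_smul]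
    exact sub_eq_zero.2 (smul_right_injective _ hdz h3)
  filter_upwards [Metric.ball_mem_nhds (0 : Fin n → ℂ) hε₂pos] with z hz
  exact sub_eq_zero.1 (hfin z hz)
end
end

section
/- Let L be a set of germs at 0 ∈ ℂⁿ of holomorphic vector fields that is closed under ℂ-linear combinations and under the Lie bracket, and finite-dimensional over ℂ: there exist Z₁, …, Z_m ∈ L such that every element of L equals, as a germ, a ℂ-linear combination of Z₁, …, Z_m. Suppose every Y ∈ L vanishes to order at least 2 at 0, i.e. Y(0) = 0 and DY(0) = 0. Then L is a nilpotent Lie algebra: there exists k ∈ ℕ such that for all W, Z₁, …, Z_k ∈ L the iterated bracket [Z₁, [Z₂, …, [Z_k, W]…]] vanishes identically near 0. -/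
open Filter Topology

noncomputable section

namespace Stmt5Aux

open Asymptotics

variable {E F : Type*} [NormedAddCommGroup E] [NormedSpace ℂ E]
  [NormedAddCommGroup F] [NormedSpace ℂ F]

lemma isBigO_pow_pow_nhds_zero {a b : ℕ} (h : a ≤ b) :
    (fun z : E => ‖z‖ ^ b) =O[𝓝 (0:E)] fun z => ‖z‖ ^ a := by
  apply IsBigO.of_bound 1
  filter_upwards [Metric.ball_mem_nhds (0:E) one_pos] with z hz
  rw [Metric.mem_ball, dist_zero_right] at hz
  simp only [norm_pow, norm_norm, one_mul]
  exact pow_le_pow_of_le_one (norm_nonneg z) hz.le h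

lemma isBigO_of_diag_zero {f : E → F} {p : FormalMultilinearSeries ℂ E F}
    (hp : HasFPowerSeriesAt f p 0) {k : ℕ} (h : ∀ j < k, ∀ y, (p j fun _ => y) = 0) :
    f =O[𝓝 (0:E)] fun z => ‖z‖ ^ k := by
  have h1 := hp.isBigO_sub_partialSum_pow k
  have heq : (fun y : E => f (0 + y) - p.partialSum k y) = f := by
    funext z
    rw [FormalMultilinearSeries.partialSum,
      Finset.sum_eq_zero fun i hi => h i (Finset.mem_range.mp hi) z]
    simp
  rwa [heq] at h1

lemma diag_zero_of_isBigO {f : E → F} {p : FormalMultilinearSeries ℂ E F}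
    (hp : HasFPowerSeriesAt f p 0) {k : ℕ} (hf : f =O[𝓝 (0:E)] fun z => ‖z‖ ^ k) :
    ∀ j, j < k → ∀ y, (p j fun _ => y) = 0 := by
  intro j
  induction j using Nat.strong_induction_on with
  | _ j ih =>
  intro hj y
  have hf' : f =O[𝓝 (0:E)] fun z => ‖z‖ ^ (j+1) :=
    hf.trans (isBigO_pow_pow_nhds_zero hj)
  have h1 := hp.isBigO_sub_partialSum_pow (j+1)
  have heq : (fun y : E => (p j fun _ => y)) =
      fun y => f y - (f (0 + y) - p.partialSum (j+1) y) := by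
    funext z
    have hps : p.partialSum (j+1) z = p j fun _ => z := by
      rw [FormalMultilinearSeries.partialSum, Finset.sum_range_succ,
        Finset.sum_eq_zero fun i hi =>
          ih i (Finset.mem_range.mp hi) ((Finset.mem_range.mp hi).trans hj) z]
      simp
    rw [hps]
    simp
  have h2 : (fun y : E => (p j fun _ => y)) =O[𝓝 (0:E)] fun y => ‖y‖ ^ (j+1) := by
    rw [heq]; exact hf'.sub h1
  exact h2.continuousMultilinearMap_apply_eq_zero y

lemma exists_series_zero_coeff {f : E → F} (hf : AnalyticAt ℂ f 0) {k : ℕ}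
    (h : f =O[𝓝 (0:E)] fun z => ‖z‖ ^ k) :
    ∃ q : FormalMultilinearSeries ℂ E F, HasFPowerSeriesAt f q 0 ∧ ∀ j < k, q j = 0 := by
  obtain ⟨p, r, hp⟩ := hf
  have hd := diag_zero_of_isBigO hp.hasFPowerSeriesAt h
  refine ⟨fun j => if j < k then 0 else p j, ⟨r, ?_, hp.r_pos, ?_⟩, fun j hj => by simp [hj]⟩
  · apply ENNReal.le_of_forall_nnreal_lt
    intro r' hr'
    obtain ⟨C, hC, hb⟩ := p.norm_mul_pow_le_of_lt_radius (hr'.trans_le hp.r_le)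
    apply FormalMultilinearSeries.le_radius_of_bound _ C
    intro n
    by_cases hn : n < k
    · simp only [hn, if_true, norm_zero, zero_mul]
      exact hC.le
    · simpa only [hn, if_false] using hb n
  · intro y hy
    have hs := hp.hasSum hy
    have heq : (fun n : ℕ => (if n < k then (0 : E[×n]→L[ℂ] F) else p n) fun _ => y)
        = fun n : ℕ => p n fun _ => y := by
      funext n
      by_cases hn : n < k
      · simp [hn, hd n hn y]
      · simp [hn]
    rwa [heq]

lemma fderiv_isBigO [CompleteSpace F] {f : E → F} (hf : AnalyticAt ℂ f 0) {k : ℕ}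
    (h : f =O[𝓝 (0:E)] fun z => ‖z‖ ^ (k+1)) :
    (fderiv ℂ f) =O[𝓝 (0:E)] fun z => ‖z‖ ^ k := by
  obtain ⟨q, hq, hzero⟩ := exists_series_zero_coeff hf h
  obtain ⟨r, hqr⟩ := hq
  apply isBigO_of_diag_zero hqr.fderiv.hasFPowerSeriesAt
  intro j hj y
  have h1 : q (1 + j) = 0 := hzero _ (by omega)
  have h2 : q.changeOriginSeries 1 j = 0 := by
    apply Finset.sum_eq_zero
    intro s _
    simp only [FormalMultilinearSeries.changeOriginSeriesTerm, h1]
    exact (ContinuousMultilinearMap.curryFinFinset ℂ E F _ _).toLinearEquiv.map_zero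
  simp [FormalMultilinearSeries.derivSeries,
    ContinuousLinearMap.compFormalMultilinearSeries_apply, h2]

lemma ord_two {Y : E → F} (hY : AnalyticAt ℂ Y 0) (h0 : Y 0 = 0)
    (h1 : fderiv ℂ Y 0 = 0) : Y =O[𝓝 (0:E)] fun z => ‖z‖ ^ 2 := by
  obtain ⟨p, hp⟩ := hY
  apply isBigO_of_diag_zero hp
  intro j hj y
  interval_cases j
  · simpa [h0] using hp.coeff_zero fun _ => y
  · have h2 := hp.fderiv_eq
    rw [h1] at h2
    have h3 : (continuousMultilinearCurryFin1 ℂ E F) (p 1) y = 0 := by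
      rw [← h2]; rfl
    have h4 : (p 1) ![y] = 0 := by simpa using h3
    convert h4 using 2
    ext i; fin_cases i; rfl

lemma eventually_zero_of_forall_isBigO {f : E → F} (hf : AnalyticAt ℂ f 0)
    (h : ∀ k : ℕ, f =O[𝓝 (0:E)] fun z => ‖z‖ ^ k) : f =ᶠ[𝓝 (0:E)] fun _ => 0 := by
  obtain ⟨p, r, hp⟩ := hf
  have hd : ∀ j, ∀ y, (p j fun _ => y) = 0 := fun j y =>
    diag_zero_of_isBigO hp.hasFPowerSeriesAt (h (j+1)) j (by omega) y
  have hball : ∀ᶠ y in 𝓝 (0:E), y ∈ EMetric.ball (0:E) r :=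
    EMetric.ball_mem_nhds _ hp.r_pos
  filter_upwards [hball] with y hy
  have hs := hp.hasSum hy
  simp only [hd] at hs
  simpa using hs.unique hasSum_zero

lemma lieBr_analyticAt [CompleteSpace E] {X Y : E → E}
    (hX : AnalyticAt ℂ X 0) (hY : AnalyticAt ℂ Y 0) :
    AnalyticAt ℂ (lieBr X Y) 0 := by
  have h1 : AnalyticAt ℂ (fun z => fderiv ℂ Y z (X z)) 0 :=
    ((ContinuousLinearMap.id ℂ (E →L[ℂ] E)).analyticAt_bilinear _).comp₂ hY.fderiv hX
  have h2 : AnalyticAt ℂ (fun z => fderiv ℂ X z (Y z)) 0 :=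
    ((ContinuousLinearMap.id ℂ (E →L[ℂ] E)).analyticAt_bilinear _).comp₂ hX.fderiv hY
  exact h1.sub h2

lemma apply_isBigO [CompleteSpace E] {X Y : E → E} {a b : ℕ}
    (hX : AnalyticAt ℂ X 0) (hY : AnalyticAt ℂ Y 0)
    (hXo : X =O[𝓝 (0:E)] fun z => ‖z‖ ^ (a+1)) (hYo : Y =O[𝓝 (0:E)] fun z => ‖z‖ ^ (b+1)) :
    (fun z => fderiv ℂ Y z (X z)) =O[𝓝 (0:E)] fun z => ‖z‖ ^ (a+b+1) := by
  have hd : (fderiv ℂ Y) =O[𝓝 (0:E)] fun z => ‖z‖ ^ b := fderiv_isBigO hY hYo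
  have step1 : (fun z => fderiv ℂ Y z (X z)) =O[𝓝 (0:E)]
      fun z => ‖fderiv ℂ Y z‖ * ‖X z‖ := by
    apply IsBigO.of_bound 1
    filter_upwards with z
    simpa using (fderiv ℂ Y z).le_opNorm (X z)
  have step2 : (fun z => ‖fderiv ℂ Y z‖ * ‖X z‖) =O[𝓝 (0:E)]
      fun z => ‖z‖ ^ b * ‖z‖ ^ (a+1) := hd.norm_left.mul hXo.norm_left
  have heq : (fun z : E => ‖z‖ ^ b * ‖z‖ ^ (a+1)) = fun z => ‖z‖ ^ (a+b+1) := by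
    funext z; rw [← pow_add]; ring_nf
  rw [heq] at step2
  exact step1.trans step2

lemma lieBr_isBigO [CompleteSpace E] {X Y : E → E} {a b : ℕ}
    (hX : AnalyticAt ℂ X 0) (hY : AnalyticAt ℂ Y 0)
    (hXo : X =O[𝓝 (0:E)] fun z => ‖z‖ ^ (a+1)) (hYo : Y =O[𝓝 (0:E)] fun z => ‖z‖ ^ (b+1)) :
    lieBr X Y =O[𝓝 (0:E)] fun z => ‖z‖ ^ (a+b+1) := by
  have h1 := apply_isBigO hX hY hXo hYo
  have h2 := apply_isBigO hY hX hYo hXo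
  have heq : (fun z : E => ‖z‖ ^ (b+a+1)) = fun z => ‖z‖ ^ (a+b+1) := by
    funext z; ring_nf
  rw [heq] at h2
  exact h1.sub h2

end Stmt5Aux

open Stmt5Aux Asymptotics in
/-- A finite-dimensional Lie algebra of germs of holomorphic vector fields all vanishing to
order `≥ 2` at `0` is nilpotent. -/
theorem stmt5 (n : ℕ) (L : Set ((Fin n → ℂ) → (Fin n → ℂ)))
    (hLa : ∀ Y ∈ L, AnalyticAt ℂ Y 0)
    -- closed under `ℂ`-linear combinations
    (hLlin : ∀ a b : ℂ, ∀ Y ∈ L, ∀ Z ∈ L, (fun z => a • Y z + b • Z z) ∈ L)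
    -- closed under the Lie bracket
    (hLbr : ∀ Y ∈ L, ∀ Z ∈ L, lieBr Y Z ∈ L)
    -- finite-dimensional over `ℂ`
    (hfin : ∃ m : ℕ, ∃ B : Fin m → ((Fin n → ℂ) → (Fin n → ℂ)),
      (∀ i, B i ∈ L) ∧ ∀ Y ∈ L, ∃ c : Fin m → ℂ,
        Y =ᶠ[𝓝 0] fun z => ∑ i, c i • B i z)
    -- every element vanishes to order at least 2 at `0`
    (hord : ∀ Y ∈ L, Y 0 = 0 ∧ fderiv ℂ Y 0 = 0) :
    ∃ k : ℕ, ∀ W ∈ L, ∀ l : List ((Fin n → ℂ) → (Fin n → ℂ)),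
      (∀ Z ∈ l, Z ∈ L) → l.length = k →
      (l.foldr lieBr W) =ᶠ[𝓝 0] fun _ => 0 := by
  classical
  obtain ⟨m, B, hBL, hrep⟩ := hfin
  -- the submodule of coefficient vectors whose combination vanishes to order ≥ k
  let N : ℕ → Submodule ℂ (Fin m → ℂ) := fun k =>
    { carrier := {c | (fun z => ∑ i, c i • B i z) =O[𝓝 (0 : Fin n → ℂ)] fun z => ‖z‖ ^ k}
      add_mem' := by
        intro c d hc hd
        have heq : (fun z => ∑ i, (c + d) i • B i z)
            = fun z => (∑ i, c i • B i z) + ∑ i, d i • B i z := by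
          funext z
          simp [add_smul, Finset.sum_add_distrib]
        simp only [Set.mem_setOf_eq] at *
        rw [heq]
        exact hc.add hd
      zero_mem' := by
        have heq : (fun z => ∑ i, (0 : Fin m → ℂ) i • B i z)
            = fun _ : Fin n → ℂ => (0 : Fin n → ℂ) := by
          funext z; simp
        simp only [Set.mem_setOf_eq, heq]
        exact isBigO_zero _ _
      smul_mem' := by
        intro a c hc
        have heq : (fun z => ∑ i, (a • c) i • B i z)
            = fun z => a • ∑ i, c i • B i z := by
          funext z
          simp [Finset.smul_sum, smul_smul]
        simp only [Set.mem_setOf_eq] at *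
        rw [heq]
        exact (IsBigO.const_smul_left hc a)
      }
  have hmem : ∀ k c, c ∈ N k ↔
      (fun z => ∑ i, c i • B i z) =O[𝓝 (0 : Fin n → ℂ)] fun z => ‖z‖ ^ k := by
    intro k c; rfl
  have hanti : ∀ {k k' : ℕ}, k ≤ k' → N k' ≤ N k := by
    intro k k' hkk c hc
    rw [hmem] at *
    exact hc.trans (isBigO_pow_pow_nhds_zero hkk)
  -- choose k0 minimizing the rank
  have hne : (Set.range fun k => Module.finrank ℂ (N k)).Nonempty := ⟨_, ⟨0, rfl⟩⟩
  obtain ⟨v, ⟨k0, hk0v⟩, hmin⟩ := Nat.lt_wfRel.wf.has_min _ hne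
  have hk0 : ∀ k, Module.finrank ℂ (N k0) ≤ Module.finrank ℂ (N k) := by
    intro k
    simp only at hk0v
    rw [hk0v]
    by_contra hlt
    exact hmin _ ⟨k, rfl⟩ (by simp [WellFoundedRelation.rel, Nat.lt_wfRel]; omega)
  have hstab : ∀ k, k0 ≤ k → N k = N k0 := by
    intro k hk
    exact Submodule.eq_of_le_of_finrank_le (hanti hk) (hk0 k)
  -- the key induction on the list
  have key : ∀ l : List ((Fin n → ℂ) → (Fin n → ℂ)), ∀ W ∈ L, (∀ Z ∈ l, Z ∈ L) →
      (l.foldr lieBr W) ∈ L ∧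
      (l.foldr lieBr W) =O[𝓝 (0 : Fin n → ℂ)] fun z => ‖z‖ ^ (l.length + 2) := by
    intro l
    induction l with
    | nil =>
      intro W hW _
      exact ⟨hW, ord_two (hLa W hW) (hord W hW).1 (hord W hW).2⟩
    | cons Z l ih =>
      intro W hW hmemL
      have hZ : Z ∈ L := hmemL Z (by simp)
      obtain ⟨hVL, hVo⟩ := ih W hW (fun z hz => hmemL z (by simp [hz]))
      refine ⟨hLbr Z hZ _ hVL, ?_⟩
      have hb := lieBr_isBigO (a := 1) (b := l.length + 1)
        (hLa Z hZ) (hLa _ hVL) (ord_two (hLa Z hZ) (hord Z hZ).1 (hord Z hZ).2) hVo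
      have hlen : 1 + (l.length + 1) + 1 = (Z :: l).length + 2 := by simp; omega
      rwa [hlen] at hb
  -- conclusion
  refine ⟨k0, ?_⟩
  intro W hW l hl hlen
  obtain ⟨hVL, hVo⟩ := key l W hW hl
  obtain ⟨c, hc⟩ := hrep _ hVL
  have hgc : c ∈ N (k0 + 2) := by
    rw [hmem]
    rw [hlen] at hVo
    exact hVo.congr' hc EventuallyEq.rfl
  have hall : ∀ k, c ∈ N k := by
    intro k
    rcases le_or_gt k k0 with h | h
    · exact hanti (h.trans (by omega)) hgc
    · rw [hstab k h.le, ← hstab (k0 + 2) (by omega)]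
      exact hgc
  have hga : AnalyticAt ℂ (fun z => ∑ i, c i • B i z) (0 : Fin n → ℂ) := by
    apply Finset.analyticAt_fun_sum
    intro i _
    exact (analyticAt_const : AnalyticAt ℂ (fun _ : Fin n → ℂ => c i) 0).smul (hLa _ (hBL i))
  have hzero : (fun z => ∑ i, c i • B i z) =ᶠ[𝓝 (0 : Fin n → ℂ)] fun _ => 0 :=
    eventually_zero_of_forall_isBigO hga (fun k => (hmem k c).mp (hall k))
  exact hc.trans hzero
end
end

section
/- Let p, q ≥ 1 be integers and S(x,y) = (p·x, q·y). Let X = (X₁, X₂) and Y = (Y₁, Y₂) be germs at 0 ∈ ℂ² of holomorphic vector fields, neither identically zero, with [S, X] = k·X, [S, Y] = ℓ·Y (k, ℓ ∈ ℤ) and [X, Y] = 0 near 0. Set h := p·x·X₂ − q·y·X₁ and f := X₁·Y₂ − X₂·Y₁, and assume h is not identically zero. Then h·X(f) = f·X(h) near 0 (the meromorphic function f/h is a first integral of X). Moreover, if ℓ ≠ 0 and ℓ ≠ k, then X admits a non-constant meromorphic first integral. -/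
open Filter Topology

noncomputable section

/-- `X` has an isolated singularity at `0`. -/
def IsolatedSing {E : Type*} [NormedAddCommGroup E] [NormedSpace ℂ E] (X : E → E) : Prop :=
  X 0 = 0 ∧ ∀ᶠ z in 𝓝 (0 : E), z ≠ 0 → X z ≠ 0

/-- The germ of `a` divides the germ of `b` at `0 ∈ ℂ²`. -/
def DivGerm (a b : ℂ × ℂ → ℂ) : Prop :=
  ∃ w : ℂ × ℂ → ℂ, AnalyticAt ℂ w 0 ∧ b =ᶠ[𝓝 0] fun z => w z * a z

/-- The germ of `h` at `0 ∈ ℂ²` (with `h 0 = 0`, `h ≢ 0`) is irreducible: in any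
factorization `h = u·v` near `0`, one of the factors is a unit. -/
def IrredGerm (h : ℂ × ℂ → ℂ) : Prop :=
  ∀ u v : ℂ × ℂ → ℂ, AnalyticAt ℂ u 0 → AnalyticAt ℂ v 0 →
    (h =ᶠ[𝓝 0] fun z => u z * v z) → u 0 ≠ 0 ∨ v 0 ≠ 0

/-- The quasi-radial vector field `S(x,y) = (p·x, q·y)`. -/
def Svf (p q : ℕ) : ℂ × ℂ → ℂ × ℂ := fun z => ((p : ℂ) * z.1, (q : ℂ) * z.2)

/-! ### Auxiliary lemmas -/

/-- `S` as a continuous linear map. -/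
def Lmap (p q : ℕ) : ℂ × ℂ →L[ℂ] ℂ × ℂ :=
  ((p : ℂ) • ContinuousLinearMap.fst ℂ ℂ ℂ).prod ((q : ℂ) • ContinuousLinearMap.snd ℂ ℂ ℂ)

lemma svf_eq (p q : ℕ) : Svf p q = ⇑(Lmap p q) := by
  funext z
  simp [Svf, Lmap, Prod.ext_iff, smul_eq_mul]

lemma app1 (A : ℂ × ℂ →L[ℂ] ℂ × ℂ) (v : ℂ × ℂ) :
    (A v).1 = v.1 * (A (1, 0)).1 + v.2 * (A (0, 1)).1 := by
  have hv : v = v.1 • ((1 : ℂ), (0 : ℂ)) + v.2 • ((0 : ℂ), (1 : ℂ)) := by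
    simp [Prod.ext_iff]
  conv_lhs => rw [hv]
  rw [map_add, map_smul, map_smul]
  simp [smul_eq_mul]

lemma app2 (A : ℂ × ℂ →L[ℂ] ℂ × ℂ) (v : ℂ × ℂ) :
    (A v).2 = v.1 * (A (1, 0)).2 + v.2 * (A (0, 1)).2 := by
  have hv : v = v.1 • ((1 : ℂ), (0 : ℂ)) + v.2 • ((0 : ℂ), (1 : ℂ)) := by
    simp [Prod.ext_iff]
  conv_lhs => rw [hv]
  rw [map_add, map_smul, map_smul]
  simp [smul_eq_mul]

lemma ddet {F G : ℂ × ℂ → ℂ × ℂ} {z : ℂ × ℂ}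
    (hF : DifferentiableAt ℂ F z) (hG : DifferentiableAt ℂ G z) (v : ℂ × ℂ) :
    fderiv ℂ (fun w => (F w).1 * (G w).2 - (F w).2 * (G w).1) z v
      = (fderiv ℂ F z v).1 * (G z).2 + (F z).1 * (fderiv ℂ G z v).2
        - ((fderiv ℂ F z v).2 * (G z).1 + (F z).2 * (fderiv ℂ G z v).1) := by
  have hF1 : HasFDerivAt (fun w => (F w).1)
      ((ContinuousLinearMap.fst ℂ ℂ ℂ).comp (fderiv ℂ F z)) z :=
    (ContinuousLinearMap.fst ℂ ℂ ℂ).hasFDerivAt.comp z hF.hasFDerivAt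
  have hF2 : HasFDerivAt (fun w => (F w).2)
      ((ContinuousLinearMap.snd ℂ ℂ ℂ).comp (fderiv ℂ F z)) z :=
    (ContinuousLinearMap.snd ℂ ℂ ℂ).hasFDerivAt.comp z hF.hasFDerivAt
  have hG1 : HasFDerivAt (fun w => (G w).1)
      ((ContinuousLinearMap.fst ℂ ℂ ℂ).comp (fderiv ℂ G z)) z :=
    (ContinuousLinearMap.fst ℂ ℂ ℂ).hasFDerivAt.comp z hG.hasFDerivAt
  have hG2 : HasFDerivAt (fun w => (G w).2)
      ((ContinuousLinearMap.snd ℂ ℂ ℂ).comp (fderiv ℂ G z)) z :=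
    (ContinuousLinearMap.snd ℂ ℂ ℂ).hasFDerivAt.comp z hG.hasFDerivAt
  have H : fderiv ℂ (fun w => (F w).1 * (G w).2 - (F w).2 * (G w).1) z = _ :=
    ((hF1.mul hG2).sub (hF2.mul hG1)).fderiv
  rw [H]
  simp [ContinuousLinearMap.sub_apply, ContinuousLinearMap.add_apply,
    ContinuousLinearMap.smul_apply, ContinuousLinearMap.comp_apply, smul_eq_mul]
  ring

lemma ddetS {G : ℂ × ℂ → ℂ × ℂ} {z : ℂ × ℂ} (p q : ℕ)
    (hG : DifferentiableAt ℂ G z) (v : ℂ × ℂ) :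
    fderiv ℂ (fun w => (p : ℂ) * w.1 * (G w).2 - (q : ℂ) * w.2 * (G w).1) z v
      = (p : ℂ) * v.1 * (G z).2 + (p : ℂ) * z.1 * (fderiv ℂ G z v).2
        - ((q : ℂ) * v.2 * (G z).1 + (q : ℂ) * z.2 * (fderiv ℂ G z v).1) := by
  have hG1 : HasFDerivAt (fun w => (G w).1)
      ((ContinuousLinearMap.fst ℂ ℂ ℂ).comp (fderiv ℂ G z)) z :=
    (ContinuousLinearMap.fst ℂ ℂ ℂ).hasFDerivAt.comp z hG.hasFDerivAt
  have hG2 : HasFDerivAt (fun w => (G w).2)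
      ((ContinuousLinearMap.snd ℂ ℂ ℂ).comp (fderiv ℂ G z)) z :=
    (ContinuousLinearMap.snd ℂ ℂ ℂ).hasFDerivAt.comp z hG.hasFDerivAt
  have h1 : HasFDerivAt (fun w : ℂ × ℂ => (p : ℂ) * w.1)
      ((p : ℂ) • ContinuousLinearMap.fst ℂ ℂ ℂ) z := hasFDerivAt_fst.const_mul _
  have h2 : HasFDerivAt (fun w : ℂ × ℂ => (q : ℂ) * w.2)
      ((q : ℂ) • ContinuousLinearMap.snd ℂ ℂ ℂ) z := hasFDerivAt_snd.const_mul _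
  have H : fderiv ℂ (fun w => (p : ℂ) * w.1 * (G w).2 - (q : ℂ) * w.2 * (G w).1) z = _ :=
    ((h1.mul hG2).sub (h2.mul hG1)).fderiv
  rw [H]
  simp [ContinuousLinearMap.sub_apply, ContinuousLinearMap.add_apply,
    ContinuousLinearMap.smul_apply, ContinuousLinearMap.comp_apply, smul_eq_mul]
  ring

lemma anDet {F G : ℂ × ℂ → ℂ × ℂ} {z : ℂ × ℂ}
    (hF : AnalyticAt ℂ F z) (hG : AnalyticAt ℂ G z) :
    AnalyticAt ℂ (fun w => (F w).1 * (G w).2 - (F w).2 * (G w).1) z := by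
  have hF1 : AnalyticAt ℂ (fun w => (F w).1) z := analyticAt_fst.comp hF
  have hF2 : AnalyticAt ℂ (fun w => (F w).2) z := analyticAt_snd.comp hF
  have hG1 : AnalyticAt ℂ (fun w => (G w).1) z := analyticAt_fst.comp hG
  have hG2 : AnalyticAt ℂ (fun w => (G w).2) z := analyticAt_snd.comp hG
  exact (hF1.mul hG2).sub (hF2.mul hG1)

lemma anDetS {G : ℂ × ℂ → ℂ × ℂ} {z : ℂ × ℂ} (p q : ℕ) (hG : AnalyticAt ℂ G z) :
    AnalyticAt ℂ (fun w => (p : ℂ) * w.1 * (G w).2 - (q : ℂ) * w.2 * (G w).1) z := by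
  have hG1 : AnalyticAt ℂ (fun w => (G w).1) z := analyticAt_fst.comp hG
  have hG2 : AnalyticAt ℂ (fun w => (G w).2) z := analyticAt_snd.comp hG
  exact ((analyticAt_const.mul analyticAt_fst).mul hG2).sub
    ((analyticAt_const.mul analyticAt_snd).mul hG1)

/-- The ring of analytic germs at `0 ∈ ℂ²` has no zero divisors. -/
lemma domain_lemma {u v : ℂ × ℂ → ℂ} (hu : AnalyticAt ℂ u 0) (hv : AnalyticAt ℂ v 0)
    (huv : ∀ᶠ z in 𝓝 (0 : ℂ × ℂ), u z * v z = 0)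
    (hu0 : ¬ (u =ᶠ[𝓝 (0 : ℂ × ℂ)] fun _ => 0)) :
    v =ᶠ[𝓝 (0 : ℂ × ℂ)] fun _ => 0 := by
  by_contra hv0
  obtain ⟨r, hr, hball⟩ : ∃ r > 0, ∀ z ∈ Metric.ball (0 : ℂ × ℂ) r,
      AnalyticAt ℂ u z ∧ AnalyticAt ℂ v z ∧ u z * v z = 0 := by
    have := (hu.eventually_analyticAt.and (hv.eventually_analyticAt.and huv))
    rcases Metric.eventually_nhds_iff_ball.mp this with ⟨r, hr, hb⟩
    exact ⟨r, hr, fun z hz => hb z hz⟩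
  obtain ⟨z1, hz1B, hz1u⟩ : ∃ z ∈ Metric.ball (0 : ℂ × ℂ) r, u z ≠ 0 := by
    by_contra hall
    push_neg at hall
    exact hu0 (Filter.eventually_of_mem (Metric.ball_mem_nhds 0 hr) fun z hz => hall z hz)
  obtain ⟨z2, hz2B, hz2v⟩ : ∃ z ∈ Metric.ball (0 : ℂ × ℂ) r, v z ≠ 0 := by
    by_contra hall
    push_neg at hall
    exact hv0 (Filter.eventually_of_mem (Metric.ball_mem_nhds 0 hr) fun z hz => hall z hz)
  set w : ℂ → ℂ × ℂ := fun t => z1 + t • (z2 - z1) with hwdef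
  set T : Set ℂ := w ⁻¹' Metric.ball 0 r with hTdef
  have hwc : Continuous w := by
    apply continuous_const.add
    exact continuous_id.smul continuous_const
  have hTopen : IsOpen T := Metric.isOpen_ball.preimage hwc
  have hw0 : w 0 = z1 := by simp [hwdef]
  have hw1 : w 1 = z2 := by simp [hwdef]
  have h0T : (0 : ℂ) ∈ T := by simp only [hTdef, Set.mem_preimage, hw0]; exact hz1B
  have h1T : (1 : ℂ) ∈ T := by simp only [hTdef, Set.mem_preimage, hw1]; exact hz2B
  have hwan : ∀ t : ℂ, AnalyticAt ℂ w t := by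
    intro t
    apply analyticAt_const.add
    exact (analyticAt_id).smul analyticAt_const
  have hψan : AnalyticOnNhd ℂ (fun t => v (w t)) T := fun t ht =>
    ((hball _ ht).2.1).comp (hwan t)
  have hφcont : ContinuousAt (fun t => u (w t)) 0 :=
    (((hball _ h0T).1).comp (hwan 0)).continuousAt
  have hφ0 : u (w 0) ≠ 0 := by rw [hw0]; exact hz1u
  have hφne : ∀ᶠ t in 𝓝 (0 : ℂ), u (w t) ≠ 0 := hφcont.eventually_ne hφ0
  have hψ0 : (fun t => v (w t)) =ᶠ[𝓝 (0 : ℂ)] 0 := by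
    filter_upwards [hφne, hTopen.mem_nhds h0T] with t h1 h2
    have h3 := (hball _ h2).2.2
    rcases mul_eq_zero.mp h3 with h | h
    · exact absurd h h1
    · exact h
  have hconv : Convex ℝ T := by
    intro x hx y hy α β hα hβ hαβ
    simp only [hTdef, Set.mem_preimage] at hx hy ⊢
    have hwz : w (α • x + β • y) = α • w x + β • w y := by
      have hab : (α : ℂ) + (β : ℂ) = 1 := by exact_mod_cast hαβ
      show z1 + (α • x + β • y) • (z2 - z1)
          = α • (z1 + x • (z2 - z1)) + β • (z1 + y • (z2 - z1))
      rw [smul_add, smul_add, add_smul, ← smul_assoc, ← smul_assoc]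
      match_scalars <;> simp only [Complex.coe_algebraMap] <;>
        linear_combination -hab
    rw [hwz]
    exact convex_ball (0 : ℂ × ℂ) r hx hy hα hβ hαβ
  have heq := hψan.eqOn_zero_of_preconnected_of_eventuallyEq_zero hconv.isPreconnected h0T hψ0
  have hv1 : v (w 1) = 0 := heq h1T
  rw [hw1] at hv1
  exact hz2v hv1

/-- The main pointwise computation. -/
lemma keyPt (p q : ℕ) (k l : ℤ) (X Y : ℂ × ℂ → ℂ × ℂ) (z : ℂ × ℂ)
    (hXd : DifferentiableAt ℂ X z) (hYd : DifferentiableAt ℂ Y z)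
    (hk : lieBr (Svf p q) X z = (k : ℂ) • X z)
    (hl : lieBr (Svf p q) Y z = (l : ℂ) • Y z)
    (hc : lieBr X Y z = 0) :
    (∃ t : ℂ,
      fderiv ℂ (fun w => (p : ℂ) * w.1 * (X w).2 - (q : ℂ) * w.2 * (X w).1) z (X z)
        = t * ((p : ℂ) * z.1 * (X z).2 - (q : ℂ) * z.2 * (X z).1) ∧
      fderiv ℂ (fun w => (X w).1 * (Y w).2 - (X w).2 * (Y w).1) z (X z)
        = t * ((X z).1 * (Y z).2 - (X z).2 * (Y z).1) ∧
      fderiv ℂ (fun w => (p : ℂ) * w.1 * (Y w).2 - (q : ℂ) * w.2 * (Y w).1) z (X z)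
        = t * ((p : ℂ) * z.1 * (Y z).2 - (q : ℂ) * z.2 * (Y z).1)
          - (k : ℂ) * ((X z).1 * (Y z).2 - (X z).2 * (Y z).1)) ∧
    fderiv ℂ (fun w => (p : ℂ) * w.1 * (X w).2 - (q : ℂ) * w.2 * (X w).1) z (Svf p q z)
      = ((k : ℂ) + p + q) * ((p : ℂ) * z.1 * (X z).2 - (q : ℂ) * z.2 * (X z).1) ∧
    fderiv ℂ (fun w => (X w).1 * (Y w).2 - (X w).2 * (Y w).1) z (Svf p q z)
      = ((k : ℂ) + (l : ℂ) + p + q) * ((X z).1 * (Y z).2 - (X z).2 * (Y z).1) ∧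
    fderiv ℂ (fun w => (p : ℂ) * w.1 * (Y w).2 - (q : ℂ) * w.2 * (Y w).1) z (Svf p q z)
      = ((l : ℂ) + p + q) * ((p : ℂ) * z.1 * (Y z).2 - (q : ℂ) * z.2 * (Y z).1) := by
  have hSf : fderiv ℂ (Svf p q) z = Lmap p q := by
    rw [svf_eq]; exact ContinuousLinearMap.fderiv _
  simp only [lieBr] at hk hl hc
  rw [hSf] at hk hl
  have hkv : fderiv ℂ X z (Svf p q z) = (k : ℂ) • X z + Lmap p q (X z) :=
    eq_add_of_sub_eq hk
  have hlv : fderiv ℂ Y z (Svf p q z) = (l : ℂ) • Y z + Lmap p q (Y z) :=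
    eq_add_of_sub_eq hl
  have hcv : fderiv ℂ Y z (X z) = fderiv ℂ X z (Y z) := sub_eq_zero.mp hc
  have K1 : (p : ℂ) * z.1 * (fderiv ℂ X z (1, 0)).1 + (q : ℂ) * z.2 * (fderiv ℂ X z (0, 1)).1
      = (k : ℂ) * (X z).1 + (p : ℂ) * (X z).1 := by
    have h1 := congrArg Prod.fst hkv
    rw [app1] at h1
    simp only [Svf, Lmap, Prod.fst_add, Prod.smul_fst, smul_eq_mul,
      ContinuousLinearMap.prod_apply, ContinuousLinearMap.smul_apply,
      ContinuousLinearMap.coe_fst', ContinuousLinearMap.coe_snd'] at h1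
    linear_combination h1
  have K2 : (p : ℂ) * z.1 * (fderiv ℂ X z (1, 0)).2 + (q : ℂ) * z.2 * (fderiv ℂ X z (0, 1)).2
      = (k : ℂ) * (X z).2 + (q : ℂ) * (X z).2 := by
    have h1 := congrArg Prod.snd hkv
    rw [app2] at h1
    simp only [Svf, Lmap, Prod.snd_add, Prod.smul_snd, smul_eq_mul,
      ContinuousLinearMap.prod_apply, ContinuousLinearMap.smul_apply,
      ContinuousLinearMap.coe_fst', ContinuousLinearMap.coe_snd'] at h1
    linear_combination h1
  have L1 : (p : ℂ) * z.1 * (fderiv ℂ Y z (1, 0)).1 + (q : ℂ) * z.2 * (fderiv ℂ Y z (0, 1)).1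
      = (l : ℂ) * (Y z).1 + (p : ℂ) * (Y z).1 := by
    have h1 := congrArg Prod.fst hlv
    rw [app1] at h1
    simp only [Svf, Lmap, Prod.fst_add, Prod.smul_fst, smul_eq_mul,
      ContinuousLinearMap.prod_apply, ContinuousLinearMap.smul_apply,
      ContinuousLinearMap.coe_fst', ContinuousLinearMap.coe_snd'] at h1
    linear_combination h1
  have L2 : (p : ℂ) * z.1 * (fderiv ℂ Y z (1, 0)).2 + (q : ℂ) * z.2 * (fderiv ℂ Y z (0, 1)).2
      = (l : ℂ) * (Y z).2 + (q : ℂ) * (Y z).2 := by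
    have h1 := congrArg Prod.snd hlv
    rw [app2] at h1
    simp only [Svf, Lmap, Prod.snd_add, Prod.smul_snd, smul_eq_mul,
      ContinuousLinearMap.prod_apply, ContinuousLinearMap.smul_apply,
      ContinuousLinearMap.coe_fst', ContinuousLinearMap.coe_snd'] at h1
    linear_combination h1
  have E1 : (X z).1 * (fderiv ℂ Y z (1, 0)).1 + (X z).2 * (fderiv ℂ Y z (0, 1)).1
      = (Y z).1 * (fderiv ℂ X z (1, 0)).1 + (Y z).2 * (fderiv ℂ X z (0, 1)).1 := by
    have h1 := congrArg Prod.fst hcv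
    rw [app1 (fderiv ℂ Y z) (X z), app1 (fderiv ℂ X z) (Y z)] at h1
    linear_combination h1
  have E2 : (X z).1 * (fderiv ℂ Y z (1, 0)).2 + (X z).2 * (fderiv ℂ Y z (0, 1)).2
      = (Y z).1 * (fderiv ℂ X z (1, 0)).2 + (Y z).2 * (fderiv ℂ X z (0, 1)).2 := by
    have h1 := congrArg Prod.snd hcv
    rw [app2 (fderiv ℂ Y z) (X z), app2 (fderiv ℂ X z) (Y z)] at h1
    linear_combination h1
  refine ⟨⟨(fderiv ℂ X z (1, 0)).1 + (fderiv ℂ X z (0, 1)).2, ?_, ?_, ?_⟩, ?_, ?_, ?_⟩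
  · rw [ddetS p q hXd, app1 (fderiv ℂ X z) (X z), app2 (fderiv ℂ X z) (X z)]
    linear_combination (X z).1 * K2 - (X z).2 * K1
  · rw [ddet hXd hYd, app1 (fderiv ℂ X z) (X z), app2 (fderiv ℂ X z) (X z),
      app1 (fderiv ℂ Y z) (X z), app2 (fderiv ℂ Y z) (X z)]
    linear_combination (X z).1 * E2 - (X z).2 * E1
  · rw [ddetS p q hYd, app1 (fderiv ℂ Y z) (X z), app2 (fderiv ℂ Y z) (X z)]
    linear_combination (p : ℂ) * z.1 * E2 - (q : ℂ) * z.2 * E1 + (Y z).1 * K2 - (Y z).2 * K1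
  · rw [ddetS p q hXd, app1 (fderiv ℂ X z) (Svf p q z), app2 (fderiv ℂ X z) (Svf p q z)]
    simp only [Svf]
    linear_combination (p : ℂ) * z.1 * K2 - (q : ℂ) * z.2 * K1
  · rw [ddet hXd hYd, app1 (fderiv ℂ X z) (Svf p q z), app2 (fderiv ℂ X z) (Svf p q z),
      app1 (fderiv ℂ Y z) (Svf p q z), app2 (fderiv ℂ Y z) (Svf p q z)]
    simp only [Svf]
    linear_combination (Y z).2 * K1 + (X z).1 * L2 - (Y z).1 * K2 - (X z).2 * L1
  · rw [ddetS p q hYd, app1 (fderiv ℂ Y z) (Svf p q z), app2 (fderiv ℂ Y z) (Svf p q z)]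
    simp only [Svf]
    linear_combination (p : ℂ) * z.1 * L2 - (q : ℂ) * z.2 * L1

/-- For commuting `S` quasi-homogeneous vector fields `X ∈ E_k`, `Y ∈ E_ℓ` with
`h = p·x·X₂ - q·y·X₁ ≢ 0` and `f = X₁Y₂ - X₂Y₁`, the quotient `f/h` is a meromorphic first
integral of `X`; if `ℓ ≠ 0` and `ℓ ≠ k`, `X` admits a non-constant meromorphic first
integral. -/
theorem stmt14 (p q : ℕ) (hp : 1 ≤ p) (hq : 1 ≤ q) (k l : ℤ)
    (X Y : ℂ × ℂ → ℂ × ℂ) (hX : AnalyticAt ℂ X 0) (hY : AnalyticAt ℂ Y 0)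
    (hX0 : ¬ (X =ᶠ[𝓝 0] fun _ => 0)) (hY0 : ¬ (Y =ᶠ[𝓝 0] fun _ => 0))
    (hkX : ∀ᶠ z in 𝓝 0, lieBr (Svf p q) X z = (k : ℂ) • X z)
    (hlY : ∀ᶠ z in 𝓝 0, lieBr (Svf p q) Y z = (l : ℂ) • Y z)
    (hcomm : Commutes X Y)
    (h : ℂ × ℂ → ℂ)
    (hdef : h = fun z => (p : ℂ) * z.1 * (X z).2 - (q : ℂ) * z.2 * (X z).1)
    (f : ℂ × ℂ → ℂ)
    (fdef : f = fun z => (X z).1 * (Y z).2 - (X z).2 * (Y z).1)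
    (hh0 : ¬ (h =ᶠ[𝓝 0] fun _ => 0)) :
    -- `f/h` is a first integral of `X`
    (∀ᶠ z in 𝓝 0, h z * fderiv ℂ f z (X z) = f z * fderiv ℂ h z (X z)) ∧
    -- if `ℓ ≠ 0` and `ℓ ≠ k` then `X` has a non-constant meromorphic first integral
    (l ≠ 0 → l ≠ k →
      ∃ g h' : ℂ × ℂ → ℂ, AnalyticAt ℂ g 0 ∧ AnalyticAt ℂ h' 0 ∧
        ¬ (h' =ᶠ[𝓝 0] fun _ => 0) ∧
        (∀ᶠ z in 𝓝 0, h' z * fderiv ℂ g z (X z) = g z * fderiv ℂ h' z (X z)) ∧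
        ∀ c : ℂ, ¬ (g =ᶠ[𝓝 0] fun z => c * h' z)) := by
  subst hdef fdef
  have hfa : AnalyticAt ℂ (fun z => (X z).1 * (Y z).2 - (X z).2 * (Y z).1) 0 := anDet hX hY
  have hha : AnalyticAt ℂ (fun z => (p : ℂ) * z.1 * (X z).2 - (q : ℂ) * z.2 * (X z).1) 0 :=
    anDetS p q hX
  have hea : AnalyticAt ℂ (fun z => (p : ℂ) * z.1 * (Y z).2 - (q : ℂ) * z.2 * (Y z).1) 0 :=
    anDetS p q hY
  have hEv : ∀ᶠ z in 𝓝 (0 : ℂ × ℂ), AnalyticAt ℂ X z ∧ AnalyticAt ℂ Y z ∧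
      lieBr (Svf p q) X z = (k : ℂ) • X z ∧ lieBr (Svf p q) Y z = (l : ℂ) • Y z ∧
      lieBr X Y z = 0 := by
    filter_upwards [hX.eventually_analyticAt, hY.eventually_analyticAt, hkX, hlY, hcomm]
      with z h1 h2 h3 h4 h5
    exact ⟨h1, h2, h3, h4, h5⟩
  have part1 : ∀ᶠ z in 𝓝 (0 : ℂ × ℂ),
      (fun z => (p : ℂ) * z.1 * (X z).2 - (q : ℂ) * z.2 * (X z).1) z *
        fderiv ℂ (fun z => (X z).1 * (Y z).2 - (X z).2 * (Y z).1) z (X z)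
      = (fun z => (X z).1 * (Y z).2 - (X z).2 * (Y z).1) z *
        fderiv ℂ (fun z => (p : ℂ) * z.1 * (X z).2 - (q : ℂ) * z.2 * (X z).1) z (X z) := by
    filter_upwards [hEv] with z hz
    obtain ⟨h1, h2, h3, h4, h5⟩ := hz
    obtain ⟨⟨t, C1, C2, _⟩, _, _, _⟩ :=
      keyPt p q k l X Y z h1.differentiableAt h2.differentiableAt h3 h4 h5
    beta_reduce
    rw [C1, C2]
    ring
  refine ⟨part1, ?_⟩
  intro hl0 hlk
  by_cases hcase : ∀ c : ℂ,
    ¬ ((fun z => (X z).1 * (Y z).2 - (X z).2 * (Y z).1) =ᶠ[𝓝 (0 : ℂ × ℂ)]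
        fun z => c * ((p : ℂ) * z.1 * (X z).2 - (q : ℂ) * z.2 * (X z).1))
  · exact ⟨_, _, hfa, hha, hh0, part1, hcase⟩
  · push_neg at hcase
    obtain ⟨c, hch⟩ := hcase
    have hfe : ∀ᶠ z in 𝓝 (0 : ℂ × ℂ),
        fderiv ℂ (fun z => (X z).1 * (Y z).2 - (X z).2 * (Y z).1) z
          = fderiv ℂ (fun z => c * ((p : ℂ) * z.1 * (X z).2 - (q : ℂ) * z.2 * (X z).1)) z :=
      (eventually_eventually_nhds.mpr hch).mono fun z hz => Filter.EventuallyEq.fderiv_eq hz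
    have hc0 : c = 0 := by
      by_contra hcne
      have hkey : ∀ᶠ z in 𝓝 (0 : ℂ × ℂ),
          ((k : ℂ) + (l : ℂ) + p + q) * ((X z).1 * (Y z).2 - (X z).2 * (Y z).1)
            = c * (((k : ℂ) + p + q) *
              ((p : ℂ) * z.1 * (X z).2 - (q : ℂ) * z.2 * (X z).1)) := by
        filter_upwards [hEv, hfe] with z hz hdz
        obtain ⟨h1, h2, h3, h4, h5⟩ := hz
        obtain ⟨_, C4, C5, _⟩ :=
          keyPt p q k l X Y z h1.differentiableAt h2.differentiableAt h3 h4 h5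
        have hhd : DifferentiableAt ℂ
            (fun z => (p : ℂ) * z.1 * (X z).2 - (q : ℂ) * z.2 * (X z).1) z :=
          (anDetS p q h1).differentiableAt
        calc ((k : ℂ) + (l : ℂ) + p + q) * ((X z).1 * (Y z).2 - (X z).2 * (Y z).1)
            = fderiv ℂ (fun z => (X z).1 * (Y z).2 - (X z).2 * (Y z).1) z (Svf p q z) :=
              C5.symm
          _ = fderiv ℂ (fun z => c * ((p : ℂ) * z.1 * (X z).2 - (q : ℂ) * z.2 * (X z).1)) z
                (Svf p q z) := by rw [hdz]
          _ = (c • fderiv ℂ (fun z => (p : ℂ) * z.1 * (X z).2 - (q : ℂ) * z.2 * (X z).1) z)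
                (Svf p q z) := by rw [fderiv_const_mul hhd]
          _ = c * fderiv ℂ (fun z => (p : ℂ) * z.1 * (X z).2 - (q : ℂ) * z.2 * (X z).1) z
                (Svf p q z) := rfl
          _ = c * (((k : ℂ) + p + q) *
                ((p : ℂ) * z.1 * (X z).2 - (q : ℂ) * z.2 * (X z).1)) := by rw [C4]
      refine hh0 ?_
      filter_upwards [hkey, hch] with z h1 h2
      beta_reduce at h2 ⊢
      have h3 : (c * (l : ℂ)) * ((p : ℂ) * z.1 * (X z).2 - (q : ℂ) * z.2 * (X z).1) = 0 := by
        linear_combination h1 - ((k : ℂ) + (l : ℂ) + p + q) * h2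
      have hnz : c * (l : ℂ) ≠ 0 :=
        mul_ne_zero hcne (Int.cast_ne_zero.mpr hl0)
      exact (mul_eq_zero.mp h3).resolve_left hnz
    subst hc0
    have hf0 : ∀ᶠ z in 𝓝 (0 : ℂ × ℂ), (X z).1 * (Y z).2 - (X z).2 * (Y z).1 = 0 := by
      filter_upwards [hch] with z hz
      beta_reduce at hz
      simpa using hz
    refine ⟨(fun z => (p : ℂ) * z.1 * (Y z).2 - (q : ℂ) * z.2 * (Y z).1),
      (fun z => (p : ℂ) * z.1 * (X z).2 - (q : ℂ) * z.2 * (X z).1),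
      hea, hha, hh0, ?_, ?_⟩
    · filter_upwards [hEv, hf0] with z hz hfz
      obtain ⟨h1, h2, h3, h4, h5⟩ := hz
      obtain ⟨⟨t, C1, _, C3⟩, _, _, _⟩ :=
        keyPt p q k l X Y z h1.differentiableAt h2.differentiableAt h3 h4 h5
      beta_reduce
      rw [C1, C3]
      linear_combination (-(k : ℂ) * ((p : ℂ) * z.1 * (X z).2 - (q : ℂ) * z.2 * (X z).1)) * hfz
    · intro c' hce
      have hfe' : ∀ᶠ z in 𝓝 (0 : ℂ × ℂ),
          fderiv ℂ (fun z => (p : ℂ) * z.1 * (Y z).2 - (q : ℂ) * z.2 * (Y z).1) z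
            = fderiv ℂ (fun z => c' * ((p : ℂ) * z.1 * (X z).2 - (q : ℂ) * z.2 * (X z).1)) z :=
        (eventually_eventually_nhds.mpr hce).mono fun z hz => Filter.EventuallyEq.fderiv_eq hz
      have hkey2 : ∀ᶠ z in 𝓝 (0 : ℂ × ℂ),
          ((l : ℂ) + p + q) * ((p : ℂ) * z.1 * (Y z).2 - (q : ℂ) * z.2 * (Y z).1)
            = c' * (((k : ℂ) + p + q) *
              ((p : ℂ) * z.1 * (X z).2 - (q : ℂ) * z.2 * (X z).1)) := by
        filter_upwards [hEv, hfe'] with z hz hdz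
        obtain ⟨h1, h2, h3, h4, h5⟩ := hz
        obtain ⟨_, C4, _, C6⟩ :=
          keyPt p q k l X Y z h1.differentiableAt h2.differentiableAt h3 h4 h5
        have hhd : DifferentiableAt ℂ
            (fun z => (p : ℂ) * z.1 * (X z).2 - (q : ℂ) * z.2 * (X z).1) z :=
          (anDetS p q h1).differentiableAt
        calc ((l : ℂ) + p + q) * ((p : ℂ) * z.1 * (Y z).2 - (q : ℂ) * z.2 * (Y z).1)
            = fderiv ℂ (fun z => (p : ℂ) * z.1 * (Y z).2 - (q : ℂ) * z.2 * (Y z).1) z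
                (Svf p q z) := C6.symm
          _ = fderiv ℂ (fun z => c' * ((p : ℂ) * z.1 * (X z).2 - (q : ℂ) * z.2 * (X z).1)) z
                (Svf p q z) := by rw [hdz]
          _ = (c' • fderiv ℂ (fun z => (p : ℂ) * z.1 * (X z).2 - (q : ℂ) * z.2 * (X z).1) z)
                (Svf p q z) := by rw [fderiv_const_mul hhd]
          _ = c' * fderiv ℂ (fun z => (p : ℂ) * z.1 * (X z).2 - (q : ℂ) * z.2 * (X z).1) z
                (Svf p q z) := rfl
          _ = c' * (((k : ℂ) + p + q) *
                ((p : ℂ) * z.1 * (X z).2 - (q : ℂ) * z.2 * (X z).1)) := by rw [C4]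
      have hc'0 : c' = 0 := by
        by_contra hcne
        refine hh0 ?_
        filter_upwards [hkey2, hce] with z h1 h2
        beta_reduce at h2 ⊢
        have h3 : (c' * ((l : ℂ) - (k : ℂ))) *
            ((p : ℂ) * z.1 * (X z).2 - (q : ℂ) * z.2 * (X z).1) = 0 := by
          linear_combination h1 - ((l : ℂ) + p + q) * h2
        have hnz : c' * ((l : ℂ) - (k : ℂ)) ≠ 0 := by
          refine mul_ne_zero hcne (sub_ne_zero.mpr ?_)
          exact_mod_cast hlk
        exact (mul_eq_zero.mp h3).resolve_left hnz
      subst hc'0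
      have he0 : ∀ᶠ z in 𝓝 (0 : ℂ × ℂ),
          (p : ℂ) * z.1 * (Y z).2 - (q : ℂ) * z.2 * (Y z).1 = 0 := by
        filter_upwards [hce] with z hz
        beta_reduce at hz
        simpa using hz
      have haY1 : AnalyticAt ℂ (fun w => (Y w).1) 0 := analyticAt_fst.comp hY
      have haY2 : AnalyticAt ℂ (fun w => (Y w).2) 0 := analyticAt_snd.comp hY
      have hY1h : ∀ᶠ z in 𝓝 (0 : ℂ × ℂ),
          ((p : ℂ) * z.1 * (X z).2 - (q : ℂ) * z.2 * (X z).1) * (Y z).1 = 0 := by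
        filter_upwards [hf0, he0] with z h1 h2
        linear_combination (X z).1 * h2 - (p : ℂ) * z.1 * h1
      have hY2h : ∀ᶠ z in 𝓝 (0 : ℂ × ℂ),
          ((p : ℂ) * z.1 * (X z).2 - (q : ℂ) * z.2 * (X z).1) * (Y z).2 = 0 := by
        filter_upwards [hf0, he0] with z h1 h2
        linear_combination (X z).2 * h2 - (q : ℂ) * z.2 * h1
      have hY1z := domain_lemma hha haY1 hY1h hh0
      have hY2z := domain_lemma hha haY2 hY2h hh0
      refine hY0 ?_
      filter_upwards [hY1z, hY2z] with z h1 h2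
      exact Prod.ext h1 h2
end
end
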